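/- arXiv:1210.0514 — 12 statements merged into one kernel-verified Lean document; each statement's English description precedes it below -/
import Mathlib

section
/- For every graph G and every positive integer k, the k-rainbow domination number of G equals the domination number of the Cartesian product of G with the complete graph K_k, i.e., γ_rk(G) = γ(G □ K_k). -/
open Finset

def SimpleGraph.lexProd {α β : Type*} (G : SimpleGraph α) (H : SimpleGraph β) :
    SimpleGraph (α × β) where
  Adj x y := G.Adj x.1 y.1 ∨ (x.1 = y.1 ∧ H.Adj x.2 y.2)
  symm := by
    constructor
    intro x y h
    rcases h with h | ⟨e, h⟩
    · exact Or.inl h.symm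
    · exact Or.inr ⟨e.symm, h.symm⟩
  loopless := by
    constructor
    intro x h
    rcases h with h | ⟨_, h⟩
    · exact G.irrefl h
    · exact H.irrefl h

/-- `f` is a `k`-rainbow dominating function of `G`. -/
def IsRDF {α : Type*} (G : SimpleGraph α) (k : ℕ) (f : α → Finset (Fin k)) : Prop :=
  ∀ v, f v = ∅ → ∀ i : Fin k, ∃ u, G.Adj u v ∧ i ∈ f u

/-- weight of a labeling -/
def rdWeight {α : Type*} [Fintype α] {k : ℕ} (f : α → Finset (Fin k)) : ℕ :=
  ∑ v, (f v).card

/-- the `k`-rainbow domination number -/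
noncomputable def rdNum {α : Type*} (G : SimpleGraph α) [Fintype α] (k : ℕ) : ℕ :=
  sInf {n | ∃ f : α → Finset (Fin k), IsRDF G k f ∧ rdWeight f = n}

/-- `D` is a dominating set of `G` -/
def IsDom {α : Type*} (G : SimpleGraph α) (D : Set α) : Prop :=
  ∀ v, v ∈ D ∨ ∃ u ∈ D, G.Adj u v

/-- `D` is a total dominating set of `G` -/
def IsTotalDom {α : Type*} (G : SimpleGraph α) (D : Set α) : Prop :=
  ∀ v, ∃ u ∈ D, G.Adj u v

/-- the domination number -/
noncomputable def domNum {α : Type*} (G : SimpleGraph α) [Fintype α] : ℕ :=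
  sInf {n | ∃ D : Finset α, IsDom G ↑D ∧ D.card = n}

/-- the total domination number -/
noncomputable def totalDomNum {α : Type*} (G : SimpleGraph α) [Fintype α] : ℕ :=
  sInf {n | ∃ D : Finset α, IsTotalDom G ↑D ∧ D.card = n}

/-- `(A, B)` is a dominating couple of `G` -/
def IsDomCouple {α : Type*} [DecidableEq α] (G : SimpleGraph α) (A B : Finset α) : Prop :=
  Disjoint A B ∧ ∀ x, x ∉ B → ∃ w ∈ A ∪ B, G.Adj w x

lemma weight_eq_card {α : Type*} [Fintype α] {k : ℕ} [DecidableEq α]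
    (f : α → Finset (Fin k)) :
    rdWeight f = (Finset.univ.filter fun p : α × Fin k => p.2 ∈ f p.1).card := by
  rw [Finset.card_eq_sum_card_fiberwise (f := Prod.fst) (t := Finset.univ)
    (fun p _ => Finset.mem_univ _)]
  unfold rdWeight
  refine Finset.sum_congr rfl fun v _ => ?_
  refine Finset.card_bij (fun i _ => (v, i)) ?_ ?_ ?_
  · intro i hi
    simp_all
  · intro a ha b hb h
    simpa using congrArg Prod.snd h
  · intro p hp
    simp only [Finset.mem_filter, Finset.mem_univ, true_and] at hp
    exact ⟨p.2, by simp [← hp.2, hp.1], by simp [← hp.2]⟩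

theorem stmt0 {α : Type*} [Fintype α] (G : SimpleGraph α) (k : ℕ) (hk : 0 < k) :
    rdNum G k = domNum (G.boxProd (⊤ : SimpleGraph (Fin k))) := by
  classical
  apply le_antisymm
  · -- rdNum ≤ domNum
    apply le_csInf
    · exact ⟨Fintype.card (α × Fin k), Finset.univ, fun v => Or.inl (by simp), by simp⟩
    rintro n ⟨D, hD, rfl⟩
    apply Nat.sInf_le
    refine ⟨fun v => Finset.univ.filter fun i => (v, i) ∈ D, ?_, ?_⟩
    · intro v hv i
      have hv' : ∀ j : Fin k, (v, j) ∉ D := by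
        intro j hj
        have := Finset.eq_empty_iff_forall_notMem.mp hv j
        simp [hj] at this
      rcases hD (v, i) with h | ⟨u, hu, hadj⟩
      · exact absurd (Finset.mem_coe.mp h) (hv' i)
      · rw [SimpleGraph.boxProd_adj] at hadj
        rcases hadj with ⟨hG, he⟩ | ⟨_, he⟩
        · refine ⟨u.1, hG, ?_⟩
          simp only [Finset.mem_filter, Finset.mem_univ, true_and]
          have : u.2 = i := he
          rw [← this, Prod.mk.eta]
          exact Finset.mem_coe.mp hu
        · have he' : u.1 = v := he
          exact absurd (by rw [← he', Prod.mk.eta]; exact Finset.mem_coe.mp hu) (hv' u.2)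
    · rw [weight_eq_card]
      congr 1
      ext p
      simp
  · -- domNum ≤ rdNum
    apply le_csInf
    · refine ⟨rdWeight (fun _ : α => (Finset.univ : Finset (Fin k))),
        fun _ => Finset.univ, fun v h => ?_, rfl⟩
      have : (Finset.univ : Finset (Fin k)).Nonempty := by
        simpa [Finset.univ_nonempty_iff] using Fin.pos_iff_nonempty.mp hk
      exact absurd h this.ne_empty
    rintro n ⟨f, hf, rfl⟩
    apply Nat.sInf_le
    refine ⟨Finset.univ.filter fun p : α × Fin k => p.2 ∈ f p.1, ?_, (weight_eq_card f).symm⟩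
    intro p
    obtain ⟨v, i⟩ := p
    by_cases hi : i ∈ f v
    · exact Or.inl (by simp [hi])
    by_cases hv : f v = ∅
    · obtain ⟨u, hadj, hu⟩ := hf v hv i
      exact Or.inr ⟨(u, i), by simp [hu], by simp [SimpleGraph.boxProd_adj, hadj]⟩
    · obtain ⟨j, hj⟩ := Finset.nonempty_iff_ne_empty.mpr hv
      refine Or.inr ⟨(v, j), by simp [hj], ?_⟩
      simp only [SimpleGraph.boxProd_adj, SimpleGraph.top_adj]
      exact Or.inr ⟨fun h => hi (h ▸ hj), trivial⟩
end

section
/- If G is any finite graph and k ≥ 2 is an integer, then min{|V(G)|, γ(G)+k−2} ≤ γ_rk(G) ≤ k·γ(G). -/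
open Finset

lemma key {α : Type*} [Fintype α] (G : SimpleGraph α) (k : ℕ) (hk : 2 ≤ k)
    (f : α → Finset (Fin k)) (hf : IsRDF G k f) :
    min (Fintype.card α) (domNum G + k - 2) ≤ rdWeight f := by
  classical
  by_cases hall : ∀ v, f v ≠ ∅
  · refine le_trans (min_le_left _ _) ?_
    calc Fintype.card α = ∑ _v : α, 1 := by simp
      _ ≤ ∑ v, (f v).card := Finset.sum_le_sum fun v _ =>
          Finset.card_pos.2 (Finset.nonempty_iff_ne_empty.2 (hall v))
      _ = rdWeight f := rfl
  · push_neg at hall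
    obtain ⟨v, hv⟩ := hall
    have hprov := hf v hv
    set C : Fin k → Finset α := fun i => Finset.univ.filter (fun u => G.Adj u v ∧ i ∈ f u) with hC
    have hCpos : ∀ i, 1 ≤ (C i).card := by
      intro i
      obtain ⟨u, hu1, hu2⟩ := hprov i
      exact Finset.card_pos.2 ⟨u, by simp [hC, hu1, hu2]⟩
    obtain ⟨i0, -, hi0⟩ := Finset.exists_min_image Finset.univ (fun i => (C i).card)
      ⟨⟨0, by omega⟩, Finset.mem_univ _⟩
    -- the support off the neighborhood of v
    set B : Finset α := Finset.univ.filter (fun u => f u ≠ ∅ ∧ ¬ G.Adj u v) with hB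
    set A : Finset α := Finset.univ.filter (fun u => G.Adj u v) with hA
    -- dominating set
    set D' : Finset α := insert v (B ∪ C i0) with hD'
    have hdom : IsDom G ↑D' := by
      intro x
      by_cases hx : x = v
      · exact Or.inl (by simp [hD', hx])
      by_cases hxe : f x = ∅
      · obtain ⟨u, hu1, hu2⟩ := hf x hxe i0
        refine Or.inr ⟨u, ?_, hu1⟩
        by_cases huv : G.Adj u v
        · simp [hD', hC]
          right; right; exact ⟨huv, hu2⟩
        · simp [hD', hB]
          right; left
          exact ⟨fun h => by simp [h] at hu2, huv⟩
      · by_cases hxv : G.Adj x v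
        · exact Or.inr ⟨v, by simp [hD'], hxv.symm⟩
        · exact Or.inl (by simp [hD', hB, hxe, hxv])
    -- counting
    have hsumC : ∑ i : Fin k, (C i).card = ∑ u ∈ A, (f u).card := by
      have h1 : ∀ i, (C i).card = ∑ u ∈ A, (if i ∈ f u then 1 else 0) := by
        intro i
        rw [← Finset.card_filter]
        congr 1
        rw [hC, hA, Finset.filter_filter]
      rw [Finset.sum_congr rfl fun i _ => h1 i, Finset.sum_comm]
      refine Finset.sum_congr rfl fun u _ => ?_
      rw [Finset.sum_ite_mem, Finset.univ_inter, Finset.card_eq_sum_ones]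
    have hCsum_ge : (C i0).card + (k - 1) ≤ ∑ i : Fin k, (C i).card := by
      have := Finset.sum_le_sum (s := Finset.univ.erase i0)
        (f := fun _ : Fin k => 1) (g := fun i => (C i).card) (fun i _ => hCpos i)
      have hcard : (Finset.univ.erase i0).card = k - 1 := by
        simp [Finset.card_erase_of_mem]
      have hsplit : ∑ i : Fin k, (C i).card
          = (C i0).card + ∑ i ∈ Finset.univ.erase i0, (C i).card := by
        rw [← Finset.add_sum_erase _ _ (Finset.mem_univ i0)]
      simp at this
      omega
    have hBle : B.card ≤ ∑ u ∈ B, (f u).card := by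
      calc B.card = ∑ _u ∈ B, 1 := by simp
        _ ≤ _ := Finset.sum_le_sum fun u hu => Finset.card_pos.2
            (Finset.nonempty_iff_ne_empty.2 (by simp [hB] at hu; exact hu.1))
    have hABdisj : Disjoint B A := by
      rw [Finset.disjoint_left]
      intro u hu hu'
      rw [hB, Finset.mem_filter] at hu
      rw [hA, Finset.mem_filter] at hu'
      exact hu.2.2 hu'.2
    have hW : ∑ u ∈ B, (f u).card + ∑ u ∈ A, (f u).card ≤ rdWeight f := by
      rw [← Finset.sum_union hABdisj]
      exact Finset.sum_le_sum_of_subset (Finset.subset_univ _)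
    have hD'card : D'.card ≤ 1 + (B.card + (C i0).card) := by
      calc D'.card ≤ (B ∪ C i0).card + 1 := Finset.card_insert_le _ _ |>.trans (by omega)
        _ ≤ B.card + (C i0).card + 1 := by
            have := Finset.card_union_le B (C i0); omega
        _ = 1 + (B.card + (C i0).card) := by omega
    have hdomle : domNum G ≤ D'.card := Nat.sInf_le ⟨D', hdom, rfl⟩
    have : domNum G + k ≤ rdWeight f + 2 := by omega
    refine le_trans (min_le_right _ _) (by omega)

theorem stmt1 {α : Type*} [Fintype α] (G : SimpleGraph α) (k : ℕ) (hk : 2 ≤ k) :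
    min (Fintype.card α) (domNum G + k - 2) ≤ rdNum G k ∧ rdNum G k ≤ k * domNum G := by
  classical
  constructor
  · have hfull : IsRDF G k (fun _ : α => (Finset.univ : Finset (Fin k))) := by
      intro v he
      have he' : (Finset.univ : Finset (Fin k)) = ∅ := he
      have : (⟨0, by omega⟩ : Fin k) ∈ (Finset.univ : Finset (Fin k)) := Finset.mem_univ _
      rw [he'] at this
      simp at this
    obtain ⟨f, hf, hw⟩ := Nat.sInf_mem (s := {n | ∃ f : α → Finset (Fin k),
      IsRDF G k f ∧ rdWeight f = n}) ⟨_, _, hfull, rfl⟩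
    rw [rdNum, ← hw]
    exact key G k hk f hf
  · obtain ⟨D, hD, hDcard⟩ := Nat.sInf_mem (s := {n | ∃ D : Finset α, IsDom G ↑D ∧ D.card = n})
      ⟨_, Finset.univ, fun v => Or.inl (by simp), rfl⟩
    set g : α → Finset (Fin k) := fun v => if v ∈ D then (Finset.univ : Finset (Fin k)) else ∅
      with hg
    have hgRDF : IsRDF G k g := by
      intro v he i
      have hvD : v ∉ D := by
        intro h
        rw [hg] at he
        simp only [h, if_pos] at he
        have : (⟨0, by omega⟩ : Fin k) ∈ (Finset.univ : Finset (Fin k)) := Finset.mem_univ _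
        rw [he] at this
        simp at this
      rcases hD v with h | ⟨u, hu, hadj⟩
      · exact absurd h hvD
      · rw [Finset.mem_coe] at hu
        exact ⟨u, hadj, by simp [hg, hu]⟩
    have hwt : rdWeight g = k * domNum G := by
      rw [rdWeight]
      have : ∀ v : α, (g v).card = if v ∈ D then k else 0 := by
        intro v
        rw [hg]
        by_cases h : v ∈ D <;> simp [h]
      rw [Finset.sum_congr rfl fun v _ => this v, Finset.sum_ite_mem, Finset.univ_inter,
        Finset.sum_const, hDcard, smul_eq_mul, mul_comm]
      rfl
    exact Nat.sInf_le ⟨g, hgRDF, hwt⟩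
end

section
/- For any graph H, any graph G without isolated vertices, and every positive integer k, γ_rk(G ∘ H) ≤ k·γ_t(G). -/
open Finset

theorem stmt2 {α β : Type*} [Fintype α] [Fintype β]
    (G : SimpleGraph α) (H : SimpleGraph β)
    (hG : ∀ v : α, ∃ u, G.Adj u v) (k : ℕ) (hk : 0 < k) :
    rdNum (G.lexProd H) k ≤ k * totalDomNum G := by
  classical
  have hne : {n | ∃ D : Finset α, IsTotalDom G ↑D ∧ D.card = n}.Nonempty :=
    ⟨(Finset.univ : Finset α).card, Finset.univ,
      fun v => (hG v).imp (fun u hu => ⟨Finset.mem_coe.mpr (mem_univ u), hu⟩), rfl⟩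
  obtain ⟨D, hD, hcard⟩ := Nat.sInf_mem hne
  by_cases hβ : Nonempty β
  · obtain ⟨b0⟩ := hβ
    set f : α × β → Finset (Fin k) :=
      fun p => if p.1 ∈ D ∧ p.2 = b0 then Finset.univ else ∅ with hf
    have hrdf : IsRDF (G.lexProd H) k f := by
      intro v _ i
      obtain ⟨u, huD, hadj⟩ := hD v.1
      refine ⟨(u, b0), Or.inl hadj, ?_⟩
      simp [hf, Finset.mem_coe.mp huD]
    have hw : rdWeight f = k * totalDomNum G := by
      unfold rdWeight
      rw [Fintype.sum_prod_type]
      have : ∀ a : α, ∑ b : β, (f (a, b)).card = if a ∈ D then k else 0 := by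
        intro a
        by_cases ha : a ∈ D
        · rw [if_pos ha]
          have : ∀ b : β, (f (a, b)).card = if b = b0 then k else 0 := by
            intro b
            by_cases hb : b = b0
            · simp [hf, ha, hb]
            · simp [hf, hb]
          rw [Finset.sum_congr rfl fun b _ => this b]
          simp
        · rw [if_neg ha]
          apply Finset.sum_eq_zero
          intro b _
          simp [hf, ha]
      rw [Finset.sum_congr rfl fun a _ => this a, Finset.sum_ite_mem,
        Finset.univ_inter, Finset.sum_const, hcard, smul_eq_mul, mul_comm]
      rfl
    exact Nat.sInf_le ⟨f, hrdf, hw⟩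
  · have : rdNum (G.lexProd H) k ≤ 0 := by
      apply Nat.sInf_le
      refine ⟨fun _ => ∅, ?_, ?_⟩
      · intro v; exact absurd ⟨v.2⟩ hβ
      · unfold rdWeight
        apply Finset.sum_eq_zero
        intro v _
        exact absurd ⟨v.2⟩ hβ
    exact this.trans (Nat.zero_le _)
end

section
/- If G is a graph without isolated vertices and H is a graph with domination number γ(H)=1, then γ_rk(G ∘ H) ≤ k·γ(G) for every positive integer k. -/
open Finset

theorem stmt3 {α β : Type*} [Fintype α] [Fintype β]
    (G : SimpleGraph α) (H : SimpleGraph β)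
    (hG : ∀ v : α, ∃ u, G.Adj u v) (hH : domNum H = 1) (k : ℕ) (hk : 0 < k) :
    rdNum (G.lexProd H) k ≤ k * domNum G := by
  classical
  -- extract a minimum dominating set of G
  have hGne : (Set.Nonempty {n | ∃ D : Finset α, IsDom G ↑D ∧ D.card = n}) :=
    ⟨(Finset.univ : Finset α).card, Finset.univ, fun v => Or.inl (by simp), rfl⟩
  obtain ⟨D, hD, hDcard⟩ := Nat.sInf_mem hGne
  -- extract a dominating vertex of H
  have hHne : (Set.Nonempty {n | ∃ D : Finset β, IsDom H ↑D ∧ D.card = n}) :=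
    ⟨(Finset.univ : Finset β).card, Finset.univ, fun v => Or.inl (by simp), rfl⟩
  obtain ⟨D', hD', hD'card⟩ := Nat.sInf_mem hHne
  rw [show sInf {n | ∃ D : Finset β, IsDom H ↑D ∧ D.card = n} = domNum H from rfl, hH,
    Finset.card_eq_one] at hD'card
  obtain ⟨h0, rfl⟩ := hD'card
  set f : α × β → Finset (Fin k) :=
    fun x => if x.1 ∈ D ∧ x.2 = h0 then Finset.univ else ∅ with hf
  have hne : Nonempty (Fin k) := ⟨⟨0, hk⟩⟩
  have hRDF : IsRDF (G.lexProd H) k f := by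
    intro v hv i
    by_cases hg : v.1 ∈ D
    · have hvne : v.2 ≠ h0 := by
        intro h
        simp only [hf] at hv
        rw [if_pos (show v.1 ∈ D ∧ v.2 = h0 from ⟨hg, h⟩)] at hv
        simp [Finset.univ_eq_empty_iff, not_isEmpty_of_nonempty] at hv
      rcases hD' v.2 with hmem | ⟨u, hu, hadj⟩
      · simp only [Finset.coe_singleton, Set.mem_singleton_iff] at hmem
        exact absurd hmem hvne
      · simp only [Finset.coe_singleton, Set.mem_singleton_iff] at hu
        refine ⟨(v.1, h0), Or.inr ⟨rfl, hu ▸ hadj⟩, ?_⟩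
        simp [hf, hg]
    · rcases hD v.1 with hmem | ⟨u, hu, hadj⟩
      · exact absurd hmem hg
      · simp only [Finset.mem_coe] at hu
        refine ⟨(u, h0), Or.inl hadj, ?_⟩
        simp [hf, hu]
  have hw : rdWeight f = k * D.card := by
    rw [rdWeight, Fintype.sum_prod_type]
    have : ∀ g : α, (∑ h : β, (f (g, h)).card) = if g ∈ D then k else 0 := by
      intro g
      by_cases hg : g ∈ D
      · rw [if_pos hg]
        calc (∑ h : β, (f (g, h)).card)
            = ∑ h : β, if h = h0 then k else 0 := by
              apply Finset.sum_congr rfl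
              intro h _
              by_cases hh : h = h0 <;> simp [hf, hg, hh]
          _ = k := by simp
      · rw [if_neg hg]
        apply Finset.sum_eq_zero
        intro h _
        simp [hf, hg]
    rw [Finset.sum_congr rfl (fun g _ => this g)]
    simp [Finset.sum_ite_mem, mul_comm]
  have : rdNum (G.lexProd H) k ≤ rdWeight f :=
    Nat.sInf_le ⟨f, hRDF, rfl⟩
  rw [hw, hDcard] at this
  exact this
end

section
/- If H is a graph with |V(H)| ≥ k and G is a non-trivial graph (at least two vertices), then γ_rk(G ∘ H) ≤ min{ k|A| + γ_rk(H)|B| : (A,B) is a dominating couple of G }. -/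
open Finset

theorem stmt4 {α β : Type*} [Fintype α] [Fintype β] [DecidableEq α]
    (G : SimpleGraph α) (H : SimpleGraph β)
    (hH : k ≤ Fintype.card β) (hG : Nontrivial α) :
    rdNum (G.lexProd H) k ≤
      sInf {n | ∃ A B : Finset α, IsDomCouple G A B ∧ n = k * A.card + rdNum H k * B.card} := by
  classical
  have hne : {n | ∃ A B : Finset α, IsDomCouple G A B ∧
      n = k * A.card + rdNum H k * B.card}.Nonempty := by
    refine ⟨_, ∅, Finset.univ, ⟨Finset.disjoint_empty_left _, ?_⟩, rfl⟩
    intro x hx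
    exact absurd (Finset.mem_univ x) hx
  refine le_csInf hne ?_
  rintro n ⟨A, B, ⟨hdisj, hdom⟩, rfl⟩
  rcases Nat.eq_zero_or_pos k with hk0 | hk
  · subst hk0
    refine le_trans (Nat.sInf_le ⟨fun _ => ∅, ?_, rfl⟩) ?_
    · intro v _ i; exact i.elim0
    · simp [rdWeight]
  -- k ≥ 1
  obtain ⟨ι⟩ : Nonempty (Fin k ↪ β) := by
    apply Function.Embedding.nonempty_of_card_le
    simpa using hH
  -- an optimal RDF of H
  haveI : Nonempty (Fin k) := ⟨⟨0, hk⟩⟩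
  have hHne : {n | ∃ f : β → Finset (Fin k), IsRDF H k f ∧ rdWeight f = n}.Nonempty := by
    refine ⟨_, fun _ => Finset.univ, ?_, rfl⟩
    intro v hv i
    exact absurd hv (by simpa using (Finset.univ_nonempty (α := Fin k)).ne_empty)
  obtain ⟨g₀, hg₀, hg₀w⟩ := Nat.sInf_mem hHne
  -- a good RDF of H : weight ≤ rdNum H k and all colors appear
  obtain ⟨g, hgRDF, hgW, hgC⟩ :
      ∃ g : β → Finset (Fin k), IsRDF H k g ∧ rdWeight g ≤ rdNum H k ∧
        ∀ i : Fin k, ∃ b, i ∈ g b := by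
    by_cases hE : ∃ b, g₀ b = ∅
    · obtain ⟨b₀, hb₀⟩ := hE
      refine ⟨g₀, hg₀, le_of_eq hg₀w, fun i => ?_⟩
      obtain ⟨u, _, hu⟩ := hg₀ b₀ hb₀ i
      exact ⟨u, hu⟩
    · push_neg at hE
      refine ⟨fun b => if h : ∃ j : Fin k, ι j = b then {h.choose} else {⟨0, hk⟩},
        ?_, ?_, ?_⟩
      · intro v hv i
        exfalso
        by_cases h : ∃ j : Fin k, ι j = v <;> simp [h] at hv
      · refine le_trans ?_ (le_of_eq hg₀w)
        unfold rdWeight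
        refine Finset.sum_le_sum fun b _ => ?_
        have h1 : 1 ≤ (g₀ b).card := Finset.card_pos.mpr (hE b)
        by_cases h : ∃ j : Fin k, ι j = b <;> simp [h, h1]
      · intro i
        refine ⟨ι i, ?_⟩
        have h : ∃ j : Fin k, ι j = ι i := ⟨i, rfl⟩
        dsimp only
        rw [dif_pos h]
        have : h.choose = i := ι.injective h.choose_spec
        simp [this]
  -- the RDF of the lexicographic product
  set f : α × β → Finset (Fin k) := fun p =>
    if p.1 ∈ A then Finset.univ.filter (fun i => ι i = p.2)
    else if p.1 ∈ B then g p.2 else ∅ with hf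
  have hfRDF : IsRDF (G.lexProd H) k f := by
    rintro ⟨x, y⟩ hxy i
    by_cases hxB : x ∈ B
    · have hxA : x ∉ A := fun h => (Finset.disjoint_left.mp hdisj h) hxB
      have hgy : g y = ∅ := by simpa [hf, hxA, hxB] using hxy
      obtain ⟨u, hu, hiu⟩ := hgRDF y hgy i
      exact ⟨(x, u), Or.inr ⟨rfl, hu⟩, by simpa [hf, hxA, hxB] using hiu⟩
    · obtain ⟨w, hw, hadj⟩ := hdom x hxB
      rcases Finset.mem_union.mp hw with hwA | hwB
      · exact ⟨(w, ι i), Or.inl hadj, by simp [hf, hwA]⟩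
      · have hwA : w ∉ A := fun h => (Finset.disjoint_left.mp hdisj h) hwB
        obtain ⟨b, hb⟩ := hgC i
        exact ⟨(w, b), Or.inl hadj, by simpa [hf, hwA, hwB] using hb⟩
  refine le_trans (Nat.sInf_le ⟨f, hfRDF, rfl⟩) ?_
  -- weight computation
  have hfiber : ∀ a : α, (∑ b, (f (a, b)).card) =
      (if a ∈ A then k else 0) + (if a ∈ B then rdWeight g else 0) := by
    intro a
    by_cases haA : a ∈ A
    · have haB : a ∉ B := fun h => (Finset.disjoint_left.mp hdisj haA) h
      simp only [hf, haA, if_true, haB, if_false, add_zero]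
      have := Finset.card_eq_sum_card_fiberwise
        (s := (Finset.univ : Finset (Fin k))) (t := (Finset.univ : Finset β))
        (f := fun i => ι i) (fun x _ => Finset.mem_univ (ι x))
      simpa [Finset.filter_congr_decidable] using this.symm
    · by_cases haB : a ∈ B
      · simp [hf, haA, haB, rdWeight]
      · simp [hf, haA, haB]
  have : rdWeight f = ∑ a : α, ((if a ∈ A then k else 0) + (if a ∈ B then rdWeight g else 0)) := by
    unfold rdWeight
    rw [Fintype.sum_prod_type]
    exact Finset.sum_congr rfl fun a _ => hfiber a
  rw [this, Finset.sum_add_distrib, Finset.sum_ite_mem, Finset.sum_ite_mem,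
    Finset.univ_inter, Finset.univ_inter, Finset.sum_const, Finset.sum_const,
    smul_eq_mul, smul_eq_mul]
  have h2 : B.card * rdWeight g ≤ rdNum H k * B.card := by
    rw [mul_comm (rdNum H k)]
    exact Nat.mul_le_mul_left _ hgW
  exact Nat.add_le_add (le_of_eq (mul_comm _ _)) h2
end

section
/- Let G and H be non-trivial connected graphs with |V(H)| ≥ 3, and let f be a minimum-weight 2-rainbow dominating function of G ∘ H, inducing the partition (V_∅, V_1, V_2, V_{12}) of V(G∘H) by label. Then both π_G(V_1 ∪ V_{12}) and π_G(V_2 ∪ V_{12}) are dominating sets of G. -/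
open Finset

private lemma walk_closed' {β : Type*} {H : SimpleGraph β} (S : Set β)
    (hS : ∀ s t, s ∈ S → H.Adj s t → t ∈ S) :
    ∀ {x y : β}, H.Walk x y → x ∈ S → y ∈ S := by
  intro x y w
  induction w with
  | nil => exact id
  | cons h _ ih => intro hx; exact ih (hS _ _ hx h)

private lemma exists_deg_two' {β : Type*} [Fintype β] (H : SimpleGraph β)
    (hHc : H.Connected) (hH : 3 ≤ Fintype.card β) :
    ∃ v u w : β, u ≠ w ∧ H.Adj v u ∧ H.Adj v w := by
  classical
  by_contra hcon
  push_neg at hcon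
  obtain ⟨a⟩ := hHc.nonempty
  have hnontriv : Nontrivial β := Fintype.one_lt_card_iff_nontrivial.mp (by omega)
  obtain ⟨b, hb⟩ := exists_ne a
  obtain ⟨wab⟩ := hHc.preconnected a b
  have hadj : ∃ n, H.Adj a n := by
    cases wab with
    | nil => exact absurd rfl hb.symm
    | cons h p => exact ⟨_, h⟩
  obtain ⟨n, hn⟩ := hadj
  have hclosed : ∀ s t : β, s ∈ ({a, n} : Set β) → H.Adj s t → t ∈ ({a, n} : Set β) := by
    intro s t hs hst
    rcases hs with rfl | rfl
    · right; by_contra htn; exact hcon s t n htn hst hn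
    · left; by_contra hta; exact hcon s t a hta hst hn.symm
  have hall : ∀ y : β, y = a ∨ y = n := by
    intro y
    obtain ⟨way⟩ := hHc.preconnected a y
    exact walk_closed' _ hclosed way (Or.inl rfl)
  have hle : Fintype.card β ≤ ({a, n} : Finset β).card := by
    rw [← Finset.card_univ]
    apply Finset.card_le_card
    intro y _
    rcases hall y with rfl | rfl <;> simp
  have := Finset.card_insert_le a ({n} : Finset β)
  simp at this
  omega

private lemma key_dom {α β : Type*} [Fintype α] [Fintype β]
    (G : SimpleGraph α) (H : SimpleGraph β)
    (hHc : H.Connected) (hH : 3 ≤ Fintype.card β)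
    (f : α × β → Finset (Fin 2))
    (hf : IsRDF (G.lexProd H) 2 f) (hmin : rdWeight f = rdNum (G.lexProd H) 2)
    (i j : Fin 2) (hij : i ≠ j) :
    IsDom G {g : α | ∃ h : β, i ∈ f (g, h)} := by
  classical
  have fact1 : ∀ (s : Finset (Fin 2)) (i j : Fin 2), i ≠ j → s ≠ ∅ → i ∉ s → s = {j} := by
    decide
  have fact2 : ∀ (i j k : Fin 2), i ≠ j → k ∈ ({i, j} : Finset (Fin 2)) := by decide
  by_contra hcon
  rw [IsDom] at hcon
  push_neg at hcon
  obtain ⟨g, hg1, hg2⟩ := hcon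
  simp only [Set.mem_setOf_eq] at hg1 hg2
  push_neg at hg1
  -- every vertex in column g has label {j}
  have hcol : ∀ b : β, f (g, b) = {j} := by
    intro b
    refine fact1 _ i j hij ?_ (hg1 b)
    intro hemp
    obtain ⟨u₀, hadj, hi⟩ := hf (g, b) hemp i
    rcases hadj with hadjG | ⟨heq, _⟩
    · exact hg2 u₀.1 ⟨u₀.2, by rwa [Prod.mk.eta]⟩ hadjG
    · have hgu : (g, u₀.2) = u₀ := Prod.ext_iff.mpr ⟨by simpa using heq.symm, rfl⟩
      exact hg1 u₀.2 (hgu ▸ hi)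
  obtain ⟨v, u, w, huw, hvu, hvw⟩ := exists_deg_two' H hHc hH
  -- the improved function
  set F : α × β → Finset (Fin 2) := fun x =>
    if x.1 = g then
      (if x.2 = v then ({i, j} : Finset (Fin 2))
        else if x.2 = u ∨ x.2 = w then ∅ else {j})
    else f x with hF
  have hFg : ∀ b : β, F (g, b) =
      (if b = v then ({i, j} : Finset (Fin 2)) else if b = u ∨ b = w then ∅ else {j}) := by
    intro b; simp [hF]
  have hFne : ∀ x : α × β, x.1 ≠ g → F x = f x := by
    intro x hx; simp [hF, hx]
  -- F is an RDF
  have hFrdf : IsRDF (G.lexProd H) 2 F := by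
    intro x hx k
    by_cases hx1 : x.1 = g
    · have hxg : x = (g, x.2) := by rw [← hx1]
      rw [hxg, hFg] at hx
      have hbv : x.2 ≠ v := by
        intro h; rw [if_pos h] at hx
        have : i ∈ ({i, j} : Finset (Fin 2)) := fact2 i j i hij
        rw [hx] at this; exact absurd this (Finset.notMem_empty i)
      rw [if_neg hbv] at hx
      have huw' : x.2 = u ∨ x.2 = w := by
        by_contra h; rw [if_neg h] at hx
        exact absurd hx (Finset.singleton_ne_empty j)
      refine ⟨(g, v), Or.inr ⟨hx1.symm, ?_⟩, ?_⟩
      · rcases huw' with h | h <;> rw [h]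
        · exact hvu
        · exact hvw
      · rw [hFg]; simp only [if_pos rfl]; exact fact2 i j k hij
    · rw [hFne x hx1] at hx
      obtain ⟨u₀, hadj, hk⟩ := hf x hx k
      by_cases hu1 : u₀.1 = g
      · have hkj : k = j := by
          have : k ∈ f (g, u₀.2) := by rw [← hu1]; rwa [Prod.mk.eta]
          rw [hcol u₀.2] at this
          exact Finset.mem_singleton.mp this
        have hadjG : G.Adj g x.1 := by
          rcases hadj with h | ⟨he, _⟩
          · rwa [hu1] at h
          · exact absurd (hu1 ▸ he.symm) hx1
        refine ⟨(g, v), Or.inl hadjG, ?_⟩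
        rw [hFg]; simp only [if_pos rfl]; exact fact2 i j k hij
      · exact ⟨u₀, hadj, by rwa [hFne u₀ hu1]⟩
  -- F has strictly smaller weight
  have fact3 : ∀ i j : Fin 2, i ≠ j → ({i, j} : Finset (Fin 2)).card = 2 := by decide
  have hold : ∑ b : β, (f (g, b)).card = Fintype.card β := by simp [hcol]
  have hnew : ∑ b : β, (F (g, b)).card = Fintype.card β - 3 + 2 := by
    have hvnot : v ∉ ({u, w} : Finset β) := by simp [hvu.ne, hvw.ne]
    have hunot : u ∉ ({w} : Finset β) := by simp [huw]
    have hsub : ({v, u, w} : Finset β) ⊆ Finset.univ := Finset.subset_univ _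
    rw [← Finset.sum_sdiff hsub]
    have h1 : ∀ b ∈ Finset.univ \ ({v, u, w} : Finset β), (F (g, b)).card = 1 := by
      intro b hb
      simp only [Finset.mem_sdiff, Finset.mem_insert, Finset.mem_singleton] at hb
      push_neg at hb
      obtain ⟨-, hbv, hbu, hbw⟩ := hb
      rw [hFg, if_neg hbv, if_neg (by tauto)]
      exact Finset.card_singleton j
    rw [Finset.sum_congr rfl h1, Finset.sum_const, smul_eq_mul, mul_one,
      Finset.sum_insert hvnot, Finset.sum_insert hunot, Finset.sum_singleton]
    have hcv : (F (g, v)).card = 2 := by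
      rw [hFg, if_pos rfl]; exact fact3 i j hij
    have hcu : (F (g, u)).card = 0 := by
      rw [hFg, if_neg hvu.ne', if_pos (Or.inl rfl)]; rfl
    have hcw : (F (g, w)).card = 0 := by
      rw [hFg, if_neg hvw.ne', if_pos (Or.inr rfl)]; rfl
    have hcard : (Finset.univ \ ({v, u, w} : Finset β)).card = Fintype.card β - 3 := by
      rw [Finset.card_sdiff_of_subset hsub, Finset.card_univ]
      congr 1
      rw [Finset.card_insert_of_notMem hvnot, Finset.card_insert_of_notMem hunot,
        Finset.card_singleton]
    rw [hcv, hcu, hcw, hcard]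
    omega
  have hwlt : rdWeight F < rdWeight f := by
    rw [rdWeight, rdWeight, Fintype.sum_prod_type, Fintype.sum_prod_type]
    apply Finset.sum_lt_sum
    · intro a _
      by_cases ha : a = g
      · subst ha; rw [hold, hnew]; omega
      · apply le_of_eq
        apply Finset.sum_congr rfl
        intro b _
        rw [hFne (a, b) ha]
    · exact ⟨g, Finset.mem_univ g, by rw [hold, hnew]; omega⟩
  have hmem : rdWeight F ∈ {n | ∃ f0 : α × β → Finset (Fin 2),
      IsRDF (G.lexProd H) 2 f0 ∧ rdWeight f0 = n} := ⟨F, hFrdf, rfl⟩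
  have hle : rdNum (G.lexProd H) 2 ≤ rdWeight F := Nat.sInf_le hmem
  omega

theorem stmt7 {α β : Type*} [Fintype α] [Fintype β]
    (G : SimpleGraph α) (H : SimpleGraph β)
    (hGc : G.Connected) (hHc : H.Connected)
    (hG : Nontrivial α) (hH : 3 ≤ Fintype.card β)
    (f : α × β → Finset (Fin 2))
    (hf : IsRDF (G.lexProd H) 2 f) (hmin : rdWeight f = rdNum (G.lexProd H) 2) :
    IsDom G {g : α | ∃ h : β, (0 : Fin 2) ∈ f (g, h)} ∧
      IsDom G {g : α | ∃ h : β, (1 : Fin 2) ∈ f (g, h)} := by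
  exact ⟨key_dom G H hHc hH f hf hmin 0 1 (by decide),
    key_dom G H hHc hH f hf hmin 1 0 (by decide)⟩
end

section
/- For every non-trivial connected graph G, there exists a minimum-weight 2-rainbow dominating function of G ∘ K_2 whose induced partition (V_∅, V_1, V_2, V_{12}) satisfies that both π_G(V_1 ∪ V_{12}) and π_G(V_2 ∪ V_{12}) are dominating sets of G. -/
open Finset

lemma fin2_mem01 (i : Fin 2) : i ∈ ({0,1} : Finset (Fin 2)) := by fin_cases i <;> decide

lemma fin2_ne (x i : Fin 2) (h : x ≠ i) : x = i + 1 := by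
  fin_cases x <;> fin_cases i <;> simp_all <;> decide

lemma fin2cases (h : Fin 2) : h = 0 ∨ h = 1 := by fin_cases h <;> simp

theorem stmt8 {α : Type*} [Fintype α] (G : SimpleGraph α)
    (hGc : G.Connected) (hG : Nontrivial α) :
    ∃ f : α × Fin 2 → Finset (Fin 2),
      IsRDF (G.lexProd (⊤ : SimpleGraph (Fin 2))) 2 f ∧
      rdWeight f = rdNum (G.lexProd (⊤ : SimpleGraph (Fin 2))) 2 ∧
      IsDom G {g : α | ∃ h : Fin 2, (0 : Fin 2) ∈ f (g, h)} ∧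
      IsDom G {g : α | ∃ h : Fin 2, (1 : Fin 2) ∈ f (g, h)} := by
  classical
  have hRDF0 : IsRDF (G.lexProd (⊤ : SimpleGraph (Fin 2))) 2
      (fun _ => (Finset.univ : Finset (Fin 2))) := by
    intro v hv i
    have hu : (Finset.univ : Finset (Fin 2)) ≠ ∅ := by decide
    exact absurd hv hu
  have hne : Set.Nonempty {n | ∃ f : α × Fin 2 → Finset (Fin 2),
      IsRDF (G.lexProd (⊤ : SimpleGraph (Fin 2))) 2 f ∧ rdWeight f = n} :=
    ⟨_, fun _ => Finset.univ, hRDF0, rfl⟩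
  obtain ⟨f, hf, hw⟩ := Nat.sInf_mem hne
  set Bad : α → Prop := fun g => f (g,0) = f (g,1) ∧ (f (g,0)).card = 1 with hBad
  set f' : α × Fin 2 → Finset (Fin 2) := fun p =>
    if Bad p.1 then (if p.2 = 0 then ({0,1} : Finset (Fin 2)) else ∅) else f p with hf'
  have hA : ∀ g, Bad g → f' (g, 0) = {0, 1} := fun g hb => by
    show (if Bad g then (if (0 : Fin 2) = 0 then ({0,1} : Finset (Fin 2)) else ∅)
        else f (g, 0)) = {0, 1}
    rw [if_pos hb, if_pos rfl]
  have hB : ∀ g, Bad g → f' (g, 1) = ∅ := fun g hb => by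
    show (if Bad g then (if (1 : Fin 2) = 0 then ({0,1} : Finset (Fin 2)) else ∅)
        else f (g, 1)) = ∅
    rw [if_pos hb, if_neg (by decide : ¬ (1 : Fin 2) = 0)]
  have hC : ∀ g h, ¬ Bad g → f' (g, h) = f (g, h) := fun g h hb => by
    show (if Bad g then (if h = 0 then ({0,1} : Finset (Fin 2)) else ∅)
        else f (g, h)) = f (g, h)
    rw [if_neg hb]
  have memf' : ∀ (i : Fin 2) (u : α × Fin 2), i ∈ f u → ∃ h', i ∈ f' (u.1, h') := by
    intro i u hi
    by_cases hb : Bad u.1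
    · exact ⟨0, by rw [hA u.1 hb]; exact fin2_mem01 i⟩
    · exact ⟨u.2, by rw [hC u.1 u.2 hb]; exact hi⟩
  have hf'RDF : IsRDF (G.lexProd (⊤ : SimpleGraph (Fin 2))) 2 f' := by
    intro v hv i
    obtain ⟨g, h2⟩ := v
    by_cases hb : Bad g
    · rcases fin2cases h2 with rfl | rfl
      · rw [hA g hb] at hv; exact absurd hv (by decide)
      · refine ⟨(g, 0), Or.inr ⟨rfl, ?_⟩, by rw [hA g hb]; exact fin2_mem01 i⟩
        exact (by decide : ((⊤ : SimpleGraph (Fin 2)).Adj 0 1))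
    · have hfv : f (g, h2) = ∅ := by rw [← hC g h2 hb]; exact hv
      obtain ⟨u, hadj, hi⟩ := hf (g, h2) hfv i
      by_cases hbu : Bad u.1
      · have hneq : u.1 ≠ g := fun e => hb (e ▸ hbu)
        have hGadj : G.Adj u.1 g := by
          rcases hadj with h | ⟨e, _⟩
          · exact h
          · exact absurd e hneq
        exact ⟨(u.1, 0), Or.inl hGadj, by rw [hA u.1 hbu]; exact fin2_mem01 i⟩
      · exact ⟨u, hadj, by rw [show u = (u.1, u.2) from rfl, hC u.1 u.2 hbu]; exact hi⟩
  have hw' : rdWeight f' = rdWeight f := by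
    unfold rdWeight
    rw [Fintype.sum_prod_type, Fintype.sum_prod_type]
    refine Finset.sum_congr rfl fun g _ => ?_
    rw [Fin.sum_univ_two, Fin.sum_univ_two]
    by_cases hb : Bad g
    · have h1 : (f (g, 0)).card = 1 := hb.2
      have h2 : (f (g, 1)).card = 1 := by rw [← hb.1]; exact h1
      rw [hA g hb, hB g hb, h1, h2]; decide
    · rw [hC g 0 hb, hC g 1 hb]
  have hdom : ∀ i : Fin 2, IsDom G {g : α | ∃ h : Fin 2, i ∈ f' (g, h)} := by
    intro i g
    by_cases hb : Bad g
    · exact Or.inl ⟨0, by rw [hA g hb]; exact fin2_mem01 i⟩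
    · by_cases hi : ∃ h : Fin 2, i ∈ f (g, h)
      · obtain ⟨h, hih⟩ := hi
        exact Or.inl ⟨h, by rw [hC g h hb]; exact hih⟩
      · push_neg at hi
        have hempty : ∃ h : Fin 2, f (g, h) = ∅ := by
          by_contra hno
          push_neg at hno
          apply hb
          have e0 : f (g, 0) = {i + 1} := by
            rw [Finset.eq_singleton_iff_unique_mem]
            obtain ⟨x, hx⟩ := hno 0
            have hxe : x = i + 1 := fin2_ne x i (fun e => hi 0 (e ▸ hx))
            exact ⟨hxe ▸ hx, fun b hb' => fin2_ne b i (fun e => hi 0 (e ▸ hb'))⟩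
          have e1 : f (g, 1) = {i + 1} := by
            rw [Finset.eq_singleton_iff_unique_mem]
            obtain ⟨x, hx⟩ := hno 1
            have hxe : x = i + 1 := fin2_ne x i (fun e => hi 1 (e ▸ hx))
            exact ⟨hxe ▸ hx, fun b hb' => fin2_ne b i (fun e => hi 1 (e ▸ hb'))⟩
          exact ⟨e0.trans e1.symm, by rw [e0]; simp⟩
        obtain ⟨h, he⟩ := hempty
        obtain ⟨u, hadj, hiu⟩ := hf (g, h) he i
        have hneq : u.1 ≠ g := by
          intro e
          exact hi u.2 (by rw [← e]; exact hiu)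
        have hGadj : G.Adj u.1 g := by
          rcases hadj with hh | ⟨e, _⟩
          · exact hh
          · exact absurd e hneq
        obtain ⟨h', hi'⟩ := memf' i u hiu
        exact Or.inr ⟨u.1, ⟨h', hi'⟩, hGadj⟩
  refine ⟨f', hf'RDF, ?_, hdom 0, hdom 1⟩
  rw [hw']
  unfold rdNum
  exact hw
end

section
/- For every connected graph G and every non-trivial connected graph H, γ_r2(G ∘ H) ≥ 2γ(G). -/
open Finset

theorem stmt9 {α β : Type*} [Fintype α] [Fintype β]
    (G : SimpleGraph α) (H : SimpleGraph β)
    (hGc : G.Connected) (hHc : H.Connected) (hH : Nontrivial β) :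
    2 * domNum G ≤ rdNum (G.lexProd H) 2 := by
  classical
  have hne : {n | ∃ f : α × β → Finset (Fin 2), IsRDF (G.lexProd H) 2 f ∧ rdWeight f = n}.Nonempty := by
    refine ⟨rdWeight (fun _ : α × β => (Finset.univ : Finset (Fin 2))),
      fun _ => Finset.univ, ?_, rfl⟩
    intro v hv i
    exact absurd hv (Finset.univ_nonempty (α := Fin 2)).ne_empty
  obtain ⟨f, hf, hwf⟩ := Nat.sInf_mem hne
  rw [rdNum, ← hwf]; clear hwf hne
  -- fiber weight
  set w : α → ℕ := fun g => ∑ h, (f (g, h)).card with hw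
  set P : Fin 2 → α → Prop := fun i g => 2 ≤ w g ∨ ∃ h, i ∈ f (g, h) with hP
  set D : Fin 2 → Finset α := fun i => Finset.univ.filter (P i) with hD
  have hmem : ∀ i g, g ∈ D i ↔ P i g := by intro i g; simp [hD]
  -- each D i is a dominating set
  have hdom : ∀ i, IsDom G ↑(D i) := by
    intro i v
    by_cases hv : v ∈ D i
    · exact Or.inl hv
    · right
      have hv' : ¬ P i v := fun h => hv ((hmem i v).mpr h)
      have hw2 : ¬ 2 ≤ w v := fun h => hv' (Or.inl h)
      have hi : ∀ h, i ∉ f (v, h) := fun h hh => hv' (Or.inr ⟨h, hh⟩)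
      have hempty : ∃ h, f (v, h) = ∅ := by
        by_contra hc
        push_neg at hc
        have h1 : ∀ h, 1 ≤ (f (v, h)).card := fun h =>
          Finset.card_pos.mpr (hc h)
        have h2 : Fintype.card β ≤ w v := by
          calc Fintype.card β = ∑ _h : β, 1 := by simp
          _ ≤ _ := Finset.sum_le_sum (fun h _ => h1 h)
        have h3 := Fintype.one_lt_card (α := β)
        omega
      obtain ⟨h, hh⟩ := hempty
      obtain ⟨u, hadj, hiu⟩ := hf (v, h) hh i
      rcases hadj with hg | ⟨he, _⟩
      · refine ⟨u.1, (hmem i u.1).mpr (Or.inr ⟨u.2, ?_⟩), hg⟩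
        · rwa [Prod.mk.eta]
      · exfalso
        apply hi u.2
        have : u = (v, u.2) := Prod.ext he rfl
        rwa [this] at hiu
  -- domNum bounds
  have hle : ∀ i, domNum G ≤ (D i).card := fun i =>
    Nat.sInf_le ⟨D i, hdom i, rfl⟩
  -- pointwise counting
  have hP1 : ∀ (g : α) (i : Fin 2), (∃ h, i ∈ f (g, h)) → 1 ≤ w g := by
    rintro g i ⟨h, hh⟩
    calc 1 ≤ (f (g, h)).card := Finset.card_pos.mpr ⟨i, hh⟩
    _ ≤ w g := Finset.single_le_sum (f := fun h => (f (g, h)).card)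
        (fun _ _ => Nat.zero_le _) (Finset.mem_univ h)
  have key : ∀ g, ((if P 0 g then 1 else 0) + (if P 1 g then 1 else 0)) ≤ w g := by
    intro g
    by_cases h2 : 2 ≤ w g
    · split <;> split <;> omega
    · have hnot : ¬ (P 0 g ∧ P 1 g) := by
        rintro ⟨h0, h1⟩
        rcases h0 with h | ⟨a, ha⟩
        · exact h2 h
        rcases h1 with h | ⟨b, hb⟩
        · exact h2 h
        apply h2
        by_cases hab : a = b
        · subst hab
          have hsub : ({0, 1} : Finset (Fin 2)) ⊆ f (g, a) := by
            intro x hx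
            fin_cases hx <;> assumption
          calc 2 = ({0, 1} : Finset (Fin 2)).card := by decide
          _ ≤ (f (g, a)).card := Finset.card_le_card hsub
          _ ≤ w g := Finset.single_le_sum (f := fun h => (f (g, h)).card)
              (fun _ _ => Nat.zero_le _) (Finset.mem_univ a)
        · have hs : ({a, b} : Finset β).sum (fun h => (f (g, h)).card) ≤ w g :=
            Finset.sum_le_sum_of_subset (Finset.subset_univ _)
          have hs2 : 2 ≤ ({a, b} : Finset β).sum (fun h => (f (g, h)).card) := by
            rw [Finset.sum_pair hab]
            have c1 := Finset.card_pos.mpr ⟨(0 : Fin 2), ha⟩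
            have c2 := Finset.card_pos.mpr ⟨(1 : Fin 2), hb⟩
            omega
          omega
      split_ifs with p0 p1 p1
      · exact absurd ⟨p0, p1⟩ hnot
      · rcases p0 with h | h
        · omega
        · have := hP1 g 0 h; omega
      · rcases p1 with h | h
        · omega
        · have := hP1 g 1 h; omega
      · omega
  have hcard : (D 0).card + (D 1).card ≤ rdWeight f := by
    have e0 : ∀ i, (D i).card = ∑ g : α, (if P i g then 1 else 0) := by
      intro i; rw [hD]; simp only [Finset.card_filter]
    rw [e0 0, e0 1, ← Finset.sum_add_distrib]
    calc (∑ g : α, ((if P 0 g then 1 else 0) + (if P 1 g then 1 else 0)))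
        ≤ ∑ g : α, w g := Finset.sum_le_sum (fun g _ => key g)
    _ = rdWeight f := by rw [rdWeight, Fintype.sum_prod_type]
  have := hle 0
  have := hle 1
  omega
end

section
/- If G and H are non-trivial connected graphs and γ(G) = γ_t(G), then γ_r2(G ∘ H) = 2γ(G). -/
open Finset

lemma aux_exists_adj {α : Type*} (G : SimpleGraph α) (hc : G.Connected)
    (h : Nontrivial α) (v : α) : ∃ u, G.Adj u v := by
  obtain ⟨u, hu⟩ := exists_ne v
  obtain ⟨p⟩ := hc.preconnected v u
  cases p with
  | nil => exact absurd rfl (Ne.symm hu)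
  | cons h q => exact ⟨_, h.symm⟩

lemma aux_lower {α β : Type*} [Fintype α] [Fintype β]
    (G : SimpleGraph α) (H : SimpleGraph β) (hH : Nontrivial β)
    (f : α × β → Finset (Fin 2)) (hf : IsRDF (G.lexProd H) 2 f) :
    2 * domNum G ≤ rdWeight f := by
  classical
  set P : Fin 2 → α → Prop := fun i x => (∃ b, i ∈ f (x, b)) ∨ ∀ b, f (x, b) ≠ ∅ with hP
  have hDdom : ∀ i : Fin 2, IsDom G ↑(Finset.univ.filter (P i)) := by
    intro i v
    by_cases hv : P i v
    · left; simp [hv]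
    · right
      have hv' : ¬((∃ b, i ∈ f (v, b)) ∨ ∀ b, f (v, b) ≠ ∅) := hv
      push_neg at hv'
      obtain ⟨hcol, b, hb⟩ := hv'
      obtain ⟨u, hadj, hi⟩ := hf (v, b) hb i
      rcases hadj with h | ⟨he, _⟩
      · refine ⟨u.1, ?_, h⟩
        simp only [Finset.coe_filter, Set.mem_setOf_eq, Finset.mem_univ, true_and]
        exact Or.inl ⟨u.2, hi⟩
      · exact absurd (show i ∈ f (v, u.2) by have he2 : u.1 = v := he; rw [← he2]; exact hi) (hcol u.2)
  have key : ∀ i : Fin 2, domNum G ≤ (Finset.univ.filter (P i)).card :=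
    fun i => Nat.sInf_le ⟨_, hDdom i, rfl⟩
  have hpoint : ∀ x : α,
      ((if P 0 x then 1 else 0) + (if P 1 x then 1 else 0)) ≤ ∑ b, (f (x, b)).card := by
    intro x
    by_cases hall : ∀ b, f (x, b) ≠ ∅
    · have h1 : ∀ i : Fin 2, P i x := fun i => Or.inr hall
      simp only [if_pos (h1 0), if_pos (h1 1)]
      calc (2 : ℕ) ≤ Fintype.card β := Fintype.one_lt_card
        _ = ∑ _b : β, 1 := by simp
        _ ≤ ∑ b, (f (x, b)).card := Finset.sum_le_sum fun b _ =>
            Finset.card_pos.mpr (Finset.nonempty_iff_ne_empty.mpr (hall b))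
    · have hPi : ∀ i : Fin 2, P i x ↔ ∃ b, i ∈ f (x, b) := by
        intro i; simp [hP, hall]
      by_cases h0 : ∃ b, (0 : Fin 2) ∈ f (x, b) <;>
        by_cases h1 : ∃ b, (1 : Fin 2) ∈ f (x, b)
      · simp only [if_pos ((hPi 0).mpr h0), if_pos ((hPi 1).mpr h1)]
        obtain ⟨b0, hb0⟩ := h0
        obtain ⟨b1, hb1⟩ := h1
        calc (2 : ℕ) = (Finset.univ : Finset (Fin 2)).card := by simp
          _ ≤ (Finset.univ.biUnion fun b => f (x, b)).card := by
              apply Finset.card_le_card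
              intro j _
              fin_cases j
              · exact Finset.mem_biUnion.mpr ⟨b0, Finset.mem_univ _, hb0⟩
              · exact Finset.mem_biUnion.mpr ⟨b1, Finset.mem_univ _, hb1⟩
          _ ≤ ∑ b, (f (x, b)).card := Finset.card_biUnion_le
      · simp only [if_pos ((hPi 0).mpr h0), if_neg ((hPi 1).not.mpr h1)]
        obtain ⟨b0, hb0⟩ := h0
        have hc : 1 ≤ (f (x, b0)).card := Finset.card_pos.mpr ⟨_, hb0⟩
        exact le_trans hc (Finset.single_le_sum (f := fun b => (f (x, b)).card)
          (fun b _ => Nat.zero_le _) (Finset.mem_univ b0))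
      · simp only [if_neg ((hPi 0).not.mpr h0), if_pos ((hPi 1).mpr h1)]
        obtain ⟨b1, hb1⟩ := h1
        have hc : 1 ≤ (f (x, b1)).card := Finset.card_pos.mpr ⟨_, hb1⟩
        exact le_trans hc (Finset.single_le_sum (f := fun b => (f (x, b)).card)
          (fun b _ => Nat.zero_le _) (Finset.mem_univ b1))
      · rw [if_neg ((hPi 0).not.mpr h0), if_neg ((hPi 1).not.mpr h1)]
        exact Nat.zero_le _
  calc 2 * domNum G ≤ (Finset.univ.filter (P 0)).card + (Finset.univ.filter (P 1)).card := by
        have := key 0; have := key 1; omega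
    _ = ∑ x : α, ((if P 0 x then 1 else 0) + (if P 1 x then 1 else 0)) := by
        rw [Finset.sum_add_distrib, Finset.card_filter, Finset.card_filter]
    _ ≤ ∑ x : α, ∑ b, (f (x, b)).card := Finset.sum_le_sum fun x _ => hpoint x
    _ = rdWeight f := by rw [rdWeight, Fintype.sum_prod_type]

theorem stmt10 {α β : Type*} [Fintype α] [Fintype β]
    (G : SimpleGraph α) (H : SimpleGraph β)
    (hGc : G.Connected) (hHc : H.Connected) (hG : Nontrivial α) (hH : Nontrivial β)
    (heq : domNum G = totalDomNum G) :
    rdNum (G.lexProd H) 2 = 2 * domNum G := by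
  classical
  obtain ⟨b₀⟩ : Nonempty β := inferInstance
  -- a total dominating set of minimum size
  have hne : {n | ∃ D : Finset α, IsTotalDom G ↑D ∧ D.card = n}.Nonempty := by
    refine ⟨_, Finset.univ, ?_, rfl⟩
    intro v
    obtain ⟨u, hu⟩ := aux_exists_adj G hGc hG v
    exact ⟨u, Finset.mem_coe.mpr (Finset.mem_univ u), hu⟩
  obtain ⟨D, hD, hcard⟩ := Nat.sInf_mem hne
  rw [← totalDomNum, ← heq] at hcard
  -- the rainbow dominating function
  set f : α × β → Finset (Fin 2) :=
    fun p => if p.1 ∈ D ∧ p.2 = b₀ then (Finset.univ : Finset (Fin 2)) else ∅ with hfdef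
  have hRDF : IsRDF (G.lexProd H) 2 f := by
    intro v _ i
    obtain ⟨u, hu, hadj⟩ := hD v.1
    refine ⟨(u, b₀), Or.inl hadj, ?_⟩
    simp [hfdef, Finset.mem_coe.mp hu]
  have hweight : rdWeight f = 2 * domNum G := by
    rw [rdWeight, Fintype.sum_prod_type]
    have : ∀ x : α, ∑ b : β, (f (x, b)).card = if x ∈ D then 2 else 0 := by
      intro x
      by_cases hx : x ∈ D
      · rw [if_pos hx]
        have : ∀ b : β, (f (x, b)).card = if b = b₀ then 2 else 0 := by
          intro b
          by_cases hb : b = b₀ <;> simp [hfdef, hx, hb]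
        rw [Finset.sum_congr rfl fun b _ => this b]
        simp
      · rw [if_neg hx]
        apply Finset.sum_eq_zero
        intro b _
        simp [hfdef, hx]
    rw [Finset.sum_congr rfl fun x _ => this x, Finset.sum_ite_mem,
      Finset.univ_inter, Finset.sum_const, smul_eq_mul, ← hcard, Nat.mul_comm]
  have hub : rdNum (G.lexProd H) 2 ≤ 2 * domNum G :=
    Nat.sInf_le ⟨f, hRDF, hweight⟩
  have hne2 : {n | ∃ g : α × β → Finset (Fin 2),
      IsRDF (G.lexProd H) 2 g ∧ rdWeight g = n}.Nonempty := ⟨_, f, hRDF, hweight⟩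
  obtain ⟨g, hg, hgw⟩ := Nat.sInf_mem hne2
  rw [← rdNum] at hgw
  have hlb : 2 * domNum G ≤ rdNum (G.lexProd H) 2 := by
    rw [← hgw]
    exact aux_lower G H hH g hg
  exact le_antisymm hub hlb
end

section
/- For every non-trivial connected graph G and every graph H with γ_r2(H) = 2, γ_r2(G ∘ H) = 2γ(G). -/
open Finset

theorem stmt11 {α β : Type*} [Fintype α] [Fintype β]
    (G : SimpleGraph α) (H : SimpleGraph β)
    (hGc : G.Connected) (hG : Nontrivial α) (hH : rdNum H 2 = 2) :
    rdNum (G.lexProd H) 2 = 2 * domNum G := by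
  classical
  set SH := {n | ∃ f : β → Finset (Fin 2), IsRDF H 2 f ∧ rdWeight f = n} with hSH
  -- β is nontrivial
  have hβnt : Nontrivial β := by
    by_contra hnt
    by_cases hne : Nonempty β
    · have hsub : Subsingleton β := not_nontrivial_iff_subsingleton.mp hnt
      have h1 : (1:ℕ) ∈ SH := by
        refine ⟨fun _ => {0}, ?_, ?_⟩
        · intro v hv; simp at hv
        · have hle : Fintype.card β ≤ 1 := Fintype.card_le_one_iff_subsingleton.mpr hsub
          have hpos : 0 < Fintype.card β := Fintype.card_pos_iff.mpr hne
          have : Fintype.card β = 1 := by omega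
          simp [rdWeight, this]
      have := Nat.sInf_le h1
      rw [show sInf SH = rdNum H 2 from rfl, hH] at this
      omega
    · have h0 : (0:ℕ) ∈ SH := by
        refine ⟨fun _ => ∅, ?_, ?_⟩
        · intro v; exact (hne ⟨v⟩).elim
        · simp [rdWeight]
      have := Nat.sInf_le h0
      rw [show sInf SH = rdNum H 2 from rfl, hH] at this
      omega
  have hβ2 : 2 ≤ Fintype.card β := Fintype.one_lt_card
  -- a weight-2 RDF of H containing both colors
  obtain ⟨h, hhrdf, hhw, hhcol⟩ :
      ∃ h : β → Finset (Fin 2), IsRDF H 2 h ∧ rdWeight h = 2 ∧ ∀ i, ∃ u, i ∈ h u := by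
    have hSHne : SH.Nonempty := by
      refine ⟨rdWeight (fun _ : β => ({0,1} : Finset (Fin 2))), fun _ => {0,1}, ?_, rfl⟩
      intro v hv; simp at hv
    have hmem := Nat.sInf_mem hSHne
    rw [show sInf SH = rdNum H 2 from rfl, hH] at hmem
    obtain ⟨h0, h0rdf, h0w⟩ := hmem
    by_cases hex : ∃ v, h0 v = ∅
    · obtain ⟨v0, hv0⟩ := hex
      refine ⟨h0, h0rdf, h0w, fun i => ?_⟩
      obtain ⟨u, _, hu⟩ := h0rdf v0 hv0 i
      exact ⟨u, hu⟩
    · push_neg at hex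
      -- every vertex labeled, so card β ≤ 2, hence = 2
      have hone : ∀ v, 1 ≤ (h0 v).card := fun v =>
        Finset.card_pos.mpr (hex v)
      have hcard : Fintype.card β ≤ 2 := by
        calc Fintype.card β = ∑ v : β, 1 := by simp
        _ ≤ ∑ v : β, (h0 v).card := Finset.sum_le_sum fun v _ => hone v
        _ = 2 := h0w
      obtain ⟨u, v, huv⟩ := hβnt
      refine ⟨fun x => if x = u then {0} else {1}, ?_, ?_, ?_⟩
      · intro x hx
        by_cases hxu : x = u <;> simp [hxu] at hx
      · have hall : ∀ x : β, x = u ∨ x = v := by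
          by_contra hc
          push_neg at hc
          obtain ⟨w, hwu, hwv⟩ := hc
          have : 3 ≤ Fintype.card β := by
            have hsub : ({u, v, w} : Finset β) ⊆ Finset.univ := Finset.subset_univ _
            have : ({u, v, w} : Finset β).card = 3 := by
              rw [Finset.card_insert_of_notMem (by simp [huv, Ne.symm hwu]),
                Finset.card_insert_of_notMem (by simp [Ne.symm hwv])]
              simp
            calc (3:ℕ) = ({u, v, w} : Finset β).card := this.symm
            _ ≤ Finset.univ.card := Finset.card_le_card hsub
            _ = Fintype.card β := rfl
          omega
        have hw1 : ∀ x : β, ((if x = u then ({0}:Finset (Fin 2)) else {1})).card = 1 := by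
          intro x; by_cases hxu : x = u <;> simp [hxu]
        calc rdWeight (fun x => if x = u then ({0}:Finset (Fin 2)) else {1})
            = ∑ x : β, 1 := Finset.sum_congr rfl fun x _ => hw1 x
        _ = Fintype.card β := by simp
        _ = 2 := by
            have : 2 ≤ Fintype.card β := hβ2
            omega
      · intro i
        fin_cases i
        · exact ⟨u, by simp⟩
        · exact ⟨v, by simp [huv.symm]⟩
  -- minimum dominating set of G
  set SD := {n | ∃ D : Finset α, IsDom G ↑D ∧ D.card = n} with hSD
  have hSDne : SD.Nonempty :=
    ⟨(Finset.univ : Finset α).card, Finset.univ, fun v => Or.inl (by simp), rfl⟩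
  obtain ⟨D, hD, hDcard⟩ : ∃ D : Finset α, IsDom G ↑D ∧ D.card = domNum G :=
    Nat.sInf_mem hSDne
  set SL := {n | ∃ f : α × β → Finset (Fin 2), IsRDF (G.lexProd H) 2 f ∧ rdWeight f = n}
    with hSL
  -- upper bound
  have hub : rdNum (G.lexProd H) 2 ≤ 2 * domNum G := by
    have hmem : 2 * domNum G ∈ SL := by
      refine ⟨fun p => if p.1 ∈ D then h p.2 else ∅, ?_, ?_⟩
      · rintro ⟨x, y⟩ hxy i
        by_cases hxD : x ∈ D
        · simp only [hxD, if_true] at hxy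
          obtain ⟨u, hadj, hu⟩ := hhrdf y hxy i
          exact ⟨(x, u), Or.inr ⟨rfl, hadj⟩, by simp [hxD, hu]⟩
        · obtain hmem | ⟨d, hd, hadj⟩ := hD x
          · exact absurd hmem hxD
          · obtain ⟨u, hu⟩ := hhcol i
            exact ⟨(d, u), Or.inl hadj, by simp [Finset.mem_coe.mp hd, hu]⟩
      · calc rdWeight (fun p : α × β => if p.1 ∈ D then h p.2 else ∅)
            = ∑ x : α, ∑ y : β, (if x ∈ D then h y else ∅).card := by
              exact Fintype.sum_prod_type (fun p : α × β => (if p.1 ∈ D then h p.2 else ∅).card)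
        _ = ∑ x : α, (if x ∈ D then rdWeight h else 0) := by
            refine Finset.sum_congr rfl fun x _ => ?_
            by_cases hx : x ∈ D <;> simp [hx, rdWeight]
        _ = ∑ x ∈ D, rdWeight h := by
            rw [Finset.sum_ite_mem, Finset.univ_inter]
        _ = D.card * 2 := by rw [Finset.sum_const, hhw, smul_eq_mul]
        _ = 2 * domNum G := by rw [hDcard, Nat.mul_comm]
    exact Nat.sInf_le hmem
  -- lower bound
  have hlb : 2 * domNum G ≤ rdNum (G.lexProd H) 2 := by
    have hSLne : SL.Nonempty := by
      refine ⟨rdWeight (fun _ : α × β => ({0,1} : Finset (Fin 2))), fun _ => {0,1}, ?_, rfl⟩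
      intro v hv; simp at hv
    have hmem := Nat.sInf_mem hSLne
    obtain ⟨f, hfrdf, hfw⟩ := hmem
    rw [show sInf SL = rdNum (G.lexProd H) 2 from rfl] at hfw
    rw [← hfw]
    set A : Fin 2 → Finset α := fun i =>
      Finset.univ.filter (fun x => (∃ y, i ∈ f (x, y)) ∨ ∀ y, f (x, y) ≠ ∅) with hA
    have hAdom : ∀ i, IsDom G ↑(A i) := by
      intro i x
      by_cases hx : x ∈ A i
      · exact Or.inl hx
      · right
        simp only [hA, Finset.mem_filter, Finset.mem_univ, true_and, not_or] at hx
        obtain ⟨hno, hsome⟩ := hx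
        push_neg at hno hsome
        obtain ⟨y0, hy0⟩ := hsome
        obtain ⟨⟨u1, u2⟩, hadj, hu⟩ := hfrdf (x, y0) hy0 i
        rcases hadj with hadj | ⟨heq, _⟩
        · refine ⟨u1, ?_, hadj⟩
          simp only [hA, Finset.mem_filter, Finset.mem_univ, true_and, Finset.coe_filter]
          exact Or.inl ⟨u2, hu⟩
        · have heq' : u1 = x := heq
          subst heq'
          exact absurd hu (hno u2)
    have hAcard : ∀ i, domNum G ≤ (A i).card := fun i =>
      Nat.sInf_le ⟨A i, hAdom i, rfl⟩
    -- pointwise weight bound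
    have hpoint : ∀ x : α,
        (if x ∈ A 0 then 1 else 0) + (if x ∈ A 1 then 1 else 0)
          ≤ ∑ y : β, (f (x, y)).card := by
      intro x
      by_cases hall : ∀ y, f (x, y) ≠ ∅
      · have h2 : 2 ≤ ∑ y : β, (f (x, y)).card := by
          calc (2:ℕ) ≤ Fintype.card β := hβ2
          _ = ∑ y : β, 1 := by simp
          _ ≤ ∑ y : β, (f (x, y)).card := Finset.sum_le_sum fun y _ =>
              Finset.card_pos.mpr (Finset.nonempty_iff_ne_empty.mpr (hall y))
        have : (if x ∈ A 0 then 1 else 0) + (if x ∈ A 1 then 1 else 0) ≤ 2 := by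
          split_ifs <;> omega
        omega
      · set S := Finset.univ.biUnion (fun y : β => f (x, y)) with hS
        have hmemA : ∀ i : Fin 2, x ∈ A i ↔ i ∈ S := by
          intro i
          rw [hA, Finset.mem_filter, hS]
          simp only [Finset.mem_univ, true_and, Finset.mem_biUnion]
          constructor
          · rintro (⟨y, hy⟩ | hc)
            · exact ⟨y, hy⟩
            · exact absurd hc hall
          · rintro ⟨y, hy⟩; exact Or.inl ⟨y, hy⟩
        have hcardS : (if x ∈ A 0 then 1 else 0) + (if x ∈ A 1 then 1 else 0) = S.card := by
          rw [show ((if x ∈ A 0 then 1 else 0) + (if x ∈ A 1 then 1 else 0) : ℕ)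
              = ∑ i : Fin 2, (if i ∈ S then 1 else 0) by
            rw [Fin.sum_univ_two]
            congr 1 <;> simp [hmemA]]
          rw [Finset.sum_ite_mem, Finset.univ_inter, Finset.sum_const, smul_eq_mul, mul_one]
        rw [hcardS]
        exact Finset.card_biUnion_le
    calc 2 * domNum G = domNum G + domNum G := by ring
    _ ≤ (A 0).card + (A 1).card := Nat.add_le_add (hAcard 0) (hAcard 1)
    _ = ∑ x : α, ((if x ∈ A 0 then 1 else 0) + (if x ∈ A 1 then 1 else 0)) := by
        rw [Finset.sum_add_distrib]
        congr 1 <;>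
          rw [Finset.sum_ite_mem, Finset.univ_inter, Finset.sum_const, smul_eq_mul, mul_one]
    _ ≤ ∑ x : α, ∑ y : β, (f (x, y)).card := Finset.sum_le_sum fun x _ => hpoint x
    _ = rdWeight f := (Fintype.sum_prod_type (fun p : α × β => (f p).card)).symm
  omega
end

section
/- If G and H are non-trivial connected graphs and γ_r2(H) ≥ 4, then γ_r2(G ∘ H) = 2γ_t(G). -/
open Finset

theorem stmt12 {α β : Type*} [Fintype α] [Fintype β]
    (G : SimpleGraph α) (H : SimpleGraph β)
    (hGc : G.Connected) (hHc : H.Connected) (hG : Nontrivial α) (hH : Nontrivial β)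
    (hr : 4 ≤ rdNum H 2) :
    rdNum (G.lexProd H) 2 = 2 * totalDomNum G := by
  classical
  -- every vertex of G has a neighbor
  have aux : ∀ {u v : α}, G.Walk u v → u ≠ v → ∃ z, G.Adj z v := by
    intro u v p
    induction p with
    | nil => exact fun h => absurd rfl h
    | @cons a b c hab p ih =>
        intro _
        by_cases hbc : b = c
        · exact ⟨a, hbc ▸ hab⟩
        · exact ih hbc
  have hnb : ∀ x : α, ∃ y, G.Adj y x := by
    intro x
    obtain ⟨y, hy⟩ := exists_ne x
    obtain ⟨p⟩ := hGc.preconnected y x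
    exact aux p hy
  choose nb hnb using hnb
  -- the total domination number is achieved
  have hTmem : totalDomNum G ∈ {n | ∃ D : Finset α, IsTotalDom G ↑D ∧ D.card = n} := by
    rw [totalDomNum]
    exact Nat.sInf_mem ⟨(univ : Finset α).card, (univ : Finset α),
      fun v => ⟨nb v, by simp, hnb v⟩, rfl⟩
  obtain ⟨Dmin, hDdom, hDcard⟩ := hTmem
  -- upper bound
  have hupper : rdNum (G.lexProd H) 2 ≤ 2 * totalDomNum G := by
    have h0 : β := Classical.arbitrary β
    set f0 : α × β → Finset (Fin 2) :=
      fun v => if v.1 ∈ Dmin ∧ v.2 = h0 then Finset.univ else ∅ with hf0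
    have hrdf : IsRDF (G.lexProd H) 2 f0 := by
      intro v _ i
      obtain ⟨d, hd, hadj⟩ := hDdom v.1
      refine ⟨(d, h0), Or.inl hadj, ?_⟩
      have hd' : d ∈ Dmin := hd
      simp [hf0, hd']
    have hwt : rdWeight f0 = 2 * Dmin.card := by
      rw [rdWeight, Fintype.sum_prod_type]
      have hrow : ∀ g : α, (∑ h : β, (f0 (g, h)).card) = if g ∈ Dmin then 2 else 0 := by
        intro g
        by_cases hg : g ∈ Dmin
        · rw [if_pos hg]
          have hcell : ∀ h : β, (f0 (g, h)).card = if h = h0 then 2 else 0 := by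
            intro h
            by_cases hh : h = h0
            · simp [hf0, hg, hh]
            · simp [hf0, hh]
          rw [Finset.sum_congr rfl (fun h _ => hcell h),
            Finset.sum_ite_eq' Finset.univ h0 (fun _ => 2)]
          simp
        · have hcell : ∀ h : β, (f0 (g, h)).card = 0 := by
            intro h; simp [hf0, hg]
          simp [hcell, hg]
      rw [Finset.sum_congr rfl (fun g _ => hrow g), Finset.sum_ite_mem, Finset.univ_inter,
        Finset.sum_const, smul_eq_mul, Nat.mul_comm]
    have hle : rdNum (G.lexProd H) 2 ≤ rdWeight f0 := Nat.sInf_le ⟨f0, hrdf, rfl⟩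
    rw [hwt, hDcard] at hle
    exact hle
  -- the rainbow domination number of the product is achieved
  have hSmem : rdNum (G.lexProd H) 2 ∈
      {n | ∃ f : α × β → Finset (Fin 2), IsRDF (G.lexProd H) 2 f ∧ rdWeight f = n} := by
    rw [rdNum]
    exact Nat.sInf_mem ⟨rdWeight (fun _ : α × β => (Finset.univ : Finset (Fin 2))),
      fun _ => Finset.univ, fun v hv i => absurd hv Finset.univ_nonempty.ne_empty, rfl⟩
  obtain ⟨f, hf, hfw⟩ := hSmem
  -- claim B : if no neighbor fiber of g contains color i, then p g + q i g ≥ 4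
  have hclaimB : ∀ (i : Fin 2) (g : α), (¬ ∃ y, G.Adj y g ∧ ∃ h, i ∈ f (y, h)) →
      4 ≤ (∑ h : β, (f (g, h)).card) +
        (Finset.univ.filter (fun h : β => i ∈ f (g, h))).card := by
    intro i g hbad
    set F : β → Finset (Fin 2) := fun h => if i ∈ f (g, h) then Finset.univ else f (g, h) with hF
    have hFr : IsRDF H 2 F := by
      intro h hh c
      have hfe : f (g, h) = ∅ := by
        by_cases hi : i ∈ f (g, h)
        · exfalso
          have huniv : F h = Finset.univ := by rw [hF]; simp [hi]
          rw [hh] at huniv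
          exact absurd huniv.symm (by decide)
        · have hfh : F h = f (g, h) := by rw [hF]; simp [hi]
          rw [← hfh]; exact hh
      obtain ⟨u, hadj, hu⟩ := hf (g, h) hfe i
      rcases hadj with hG' | ⟨he, hH'⟩
      · exact absurd ⟨u.1, hG', u.2, hu⟩ hbad
      · refine ⟨u.2, hH', ?_⟩
        have hgi : i ∈ f (g, u.2) := by
          have heq : f (u.1, u.2) = f (g, u.2) := by rw [he]
          rw [← heq]; exact hu
        simp [hF, hgi]
    have h4 : 4 ≤ rdWeight F := le_trans hr (Nat.sInf_le ⟨F, hFr, rfl⟩)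
    have hle : rdWeight F ≤ (∑ h : β, (f (g, h)).card) +
        (Finset.univ.filter (fun h : β => i ∈ f (g, h))).card := by
      rw [rdWeight]
      have hb : ∀ h : β, (F h).card ≤ (f (g, h)).card + (if i ∈ f (g, h) then 1 else 0) := by
        intro h
        by_cases hi : i ∈ f (g, h)
        · have h1 : 1 ≤ (f (g, h)).card := Finset.card_pos.mpr ⟨i, hi⟩
          have h2 : (F h) = Finset.univ := by rw [hF]; simp [hi]
          rw [h2, if_pos hi, Finset.card_univ, Fintype.card_fin]
          omega
        · simp [hF, hi]
      calc ∑ h : β, (F h).card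
          ≤ ∑ h : β, ((f (g, h)).card + (if i ∈ f (g, h) then 1 else 0)) :=
            Finset.sum_le_sum (fun h _ => hb h)
        _ = (∑ h : β, (f (g, h)).card) +
            (Finset.univ.filter (fun h : β => i ∈ f (g, h))).card := by
            rw [Finset.sum_add_distrib, Finset.card_filter]
    omega
  -- claim A : if no neighbor fiber of g contains any color, then p g ≥ 4
  have hclaimA : ∀ g : α, (¬ ∃ y, G.Adj y g ∧ ∃ h, (0 : Fin 2) ∈ f (y, h)) →
      (¬ ∃ y, G.Adj y g ∧ ∃ h, (1 : Fin 2) ∈ f (y, h)) →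
      4 ≤ ∑ h : β, (f (g, h)).card := by
    intro g hb0 hb1
    have hFr : IsRDF H 2 (fun h => f (g, h)) := by
      intro h hh c
      obtain ⟨u, hadj, hu⟩ := hf (g, h) hh c
      rcases hadj with hG' | ⟨he, hH'⟩
      · exfalso
        have hc : c = 0 ∨ c = 1 := by
          rcases c with ⟨cv, hcv⟩
          interval_cases cv
          · exact Or.inl rfl
          · exact Or.inr rfl
        rcases hc with rfl | rfl
        · exact hb0 ⟨u.1, hG', u.2, hu⟩
        · exact hb1 ⟨u.1, hG', u.2, hu⟩
      · refine ⟨u.2, hH', ?_⟩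
        have heq : f (u.1, u.2) = f (g, u.2) := by rw [he]
        show c ∈ f (g, u.2)
        rw [← heq]; exact hu
    have h4 : 4 ≤ rdWeight (fun h => f (g, h)) := le_trans hr (Nat.sInf_le ⟨_, hFr, rfl⟩)
    rw [rdWeight] at h4
    exact h4
  -- per-vertex inequality
  have hper : ∀ g : α,
      ((if (∃ h, (0 : Fin 2) ∈ f (g, h)) then 1 else 0) +
        (if (¬ ∃ y, G.Adj y g ∧ ∃ h, (0 : Fin 2) ∈ f (y, h)) then 1 else 0)) +
      ((if (∃ h, (1 : Fin 2) ∈ f (g, h)) then 1 else 0) +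
        (if (¬ ∃ y, G.Adj y g ∧ ∃ h, (1 : Fin 2) ∈ f (y, h)) then 1 else 0))
      ≤ ∑ h : β, (f (g, h)).card := by
    intro g
    have L : ∀ s : Finset (Fin 2),
        (if (0 : Fin 2) ∈ s then 1 else 0) + (if (1 : Fin 2) ∈ s then 1 else 0) ≤ s.card := by
      decide
    have hq01 : (Finset.univ.filter (fun h : β => (0 : Fin 2) ∈ f (g, h))).card +
        (Finset.univ.filter (fun h : β => (1 : Fin 2) ∈ f (g, h))).card ≤
        ∑ h : β, (f (g, h)).card := by
      rw [Finset.card_filter, Finset.card_filter, ← Finset.sum_add_distrib]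
      exact Finset.sum_le_sum (fun h _ => L (f (g, h)))
    have hx : ∀ i : Fin 2, (∃ h, i ∈ f (g, h)) →
        1 ≤ (Finset.univ.filter (fun h : β => i ∈ f (g, h))).card := by
      rintro i ⟨h, hh⟩
      exact Finset.card_pos.mpr ⟨h, Finset.mem_filter.mpr ⟨Finset.mem_univ h, hh⟩⟩
    set x0 := (Finset.univ.filter (fun h : β => (0 : Fin 2) ∈ f (g, h))).card with hx0def
    set x1 := (Finset.univ.filter (fun h : β => (1 : Fin 2) ∈ f (g, h))).card with hx1def
    set P := ∑ h : β, (f (g, h)).card with hPdef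
    set χ0 := (if (∃ h, (0 : Fin 2) ∈ f (g, h)) then 1 else 0) with hχ0def
    set χ1 := (if (∃ h, (1 : Fin 2) ∈ f (g, h)) then 1 else 0) with hχ1def
    have hc0 : χ0 ≤ x0 := by
      rw [hχ0def]
      by_cases he : ∃ h, (0 : Fin 2) ∈ f (g, h)
      · rw [if_pos he]; exact hx 0 he
      · rw [if_neg he]; omega
    have hc1 : χ1 ≤ x1 := by
      rw [hχ1def]
      by_cases he : ∃ h, (1 : Fin 2) ∈ f (g, h)
      · rw [if_pos he]; exact hx 1 he
      · rw [if_neg he]; omega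
    have hcc0 : χ0 ≤ 1 := by rw [hχ0def]; split <;> omega
    have hcc1 : χ1 ≤ 1 := by rw [hχ1def]; split <;> omega
    by_cases hb0 : ∃ y, G.Adj y g ∧ ∃ h, (0 : Fin 2) ∈ f (y, h) <;>
      by_cases hb1 : ∃ y, G.Adj y g ∧ ∃ h, (1 : Fin 2) ∈ f (y, h)
    · rw [if_neg (not_not_intro hb0), if_neg (not_not_intro hb1)]
      omega
    · rw [if_neg (not_not_intro hb0), if_pos hb1]
      have h4 := hclaimB 1 g hb1
      omega
    · rw [if_pos hb0, if_neg (not_not_intro hb1)]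
      have h4 := hclaimB 0 g hb0
      omega
    · rw [if_pos hb0, if_pos hb1]
      have h4 := hclaimA g hb0 hb1
      omega
  -- for each color, a total dominating set
  have key : ∀ i : Fin 2, ∃ D : Finset α, IsTotalDom G ↑D ∧
      D.card ≤ (Finset.univ.filter (fun g : α => ∃ h, i ∈ f (g, h))).card +
        (Finset.univ.filter (fun x : α => ¬ ∃ y, G.Adj y x ∧ ∃ h, i ∈ f (y, h))).card := by
    intro i
    refine ⟨(Finset.univ.filter (fun g : α => ∃ h, i ∈ f (g, h))) ∪
      (Finset.univ.filter (fun x : α => ¬ ∃ y, G.Adj y x ∧ ∃ h, i ∈ f (y, h))).image nb,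
      ?_, ?_⟩
    · intro v
      by_cases hv : ∃ y, G.Adj y v ∧ ∃ h, i ∈ f (y, h)
      · obtain ⟨y, hadj, hy⟩ := hv
        refine ⟨y, ?_, hadj⟩
        simp only [Finset.coe_union, Set.mem_union, Finset.mem_coe, Finset.mem_filter]
        exact Or.inl ⟨Finset.mem_univ y, hy⟩
      · refine ⟨nb v, ?_, hnb v⟩
        simp only [Finset.coe_union, Set.mem_union, Finset.mem_coe, Finset.mem_image,
          Finset.mem_filter]
        exact Or.inr ⟨v, ⟨Finset.mem_univ v, hv⟩, rfl⟩
    · exact le_trans (Finset.card_union_le _ _)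
        (Nat.add_le_add_left Finset.card_image_le _)
  obtain ⟨Da, hDa, hDacard⟩ := key 0
  obtain ⟨Db, hDb, hDbcard⟩ := key 1
  have hta : totalDomNum G ≤ Da.card := Nat.sInf_le ⟨Da, hDa, rfl⟩
  have htb : totalDomNum G ≤ Db.card := Nat.sInf_le ⟨Db, hDb, rfl⟩
  -- the sum of the four cards is at most the weight
  have heq : ((Finset.univ.filter (fun g : α => ∃ h, (0 : Fin 2) ∈ f (g, h))).card +
        (Finset.univ.filter (fun x : α => ¬ ∃ y, G.Adj y x ∧ ∃ h, (0 : Fin 2) ∈ f (y, h))).card) +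
      ((Finset.univ.filter (fun g : α => ∃ h, (1 : Fin 2) ∈ f (g, h))).card +
        (Finset.univ.filter (fun x : α => ¬ ∃ y, G.Adj y x ∧ ∃ h, (1 : Fin 2) ∈ f (y, h))).card)
      = ∑ g : α,
        (((if (∃ h, (0 : Fin 2) ∈ f (g, h)) then 1 else 0) +
          (if (¬ ∃ y, G.Adj y g ∧ ∃ h, (0 : Fin 2) ∈ f (y, h)) then 1 else 0)) +
        ((if (∃ h, (1 : Fin 2) ∈ f (g, h)) then 1 else 0) +
          (if (¬ ∃ y, G.Adj y g ∧ ∃ h, (1 : Fin 2) ∈ f (y, h)) then 1 else 0))) := by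
    simp only [Finset.sum_add_distrib, Finset.card_filter]
  have hsum : Da.card + Db.card ≤ rdWeight f := by
    calc Da.card + Db.card
        ≤ _ := Nat.add_le_add hDacard hDbcard
      _ = _ := heq
      _ ≤ ∑ g : α, ∑ h : β, (f (g, h)).card := Finset.sum_le_sum (fun g _ => hper g)
      _ = rdWeight f := by rw [rdWeight, Fintype.sum_prod_type]
  have hlower : 2 * totalDomNum G ≤ rdNum (G.lexProd H) 2 := by
    rw [← hfw]
    omega
  exact le_antisymm hupper hlower
end

section
/- Let H be a connected graph with γ_r2(H) = 3 such that every minimum-weight 2-rainbow dominating function φ of H satisfies φ(h) ≠ {1,2} for all vertices h of H. Then for every graph G, γ_r2(G ∘ H) = min{ 2|A| + 3|B| : (A,B) is a dominating couple of G }. -/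
open Finset

section Basic

variable {γ : Type*} [Fintype γ]

lemma aux_rdf_const (G' : SimpleGraph γ) :
    IsRDF G' 2 (fun _ => (Finset.univ : Finset (Fin 2))) := by
  intro v hv
  exact absurd hv Finset.univ_nonempty.ne_empty

lemma aux_rdNum_le (G' : SimpleGraph γ) {f : γ → Finset (Fin 2)} (hf : IsRDF G' 2 f) :
    rdNum G' 2 ≤ rdWeight f :=
  Nat.sInf_le ⟨f, hf, rfl⟩

lemma aux_exists_min (G' : SimpleGraph γ) :
    ∃ f : γ → Finset (Fin 2), IsRDF G' 2 f ∧ rdWeight f = rdNum G' 2 := by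
  have hne : {n | ∃ f : γ → Finset (Fin 2), IsRDF G' 2 f ∧ rdWeight f = n}.Nonempty :=
    ⟨_, fun _ => Finset.univ, aux_rdf_const G', rfl⟩
  obtain ⟨f, hf, hw⟩ := Nat.sInf_mem hne
  exact ⟨f, hf, hw⟩

end Basic

section Hfacts

variable {β : Type*} [Fintype β] {H : SimpleGraph β}

lemma aux_card (hr : rdNum H 2 = 3) : 3 ≤ Fintype.card β := by
  have h1 : IsRDF H 2 (fun _ => ({0} : Finset (Fin 2))) := by
    intro v hv; simp at hv
  have h2 := aux_rdNum_le H h1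
  rw [hr] at h2
  simpa [rdWeight] using h2

lemma aux_F2 (hr : rdNum H 2 = 3)
    (hno : ∀ φ : β → Finset (Fin 2), IsRDF H 2 φ → rdWeight φ = 3 →
      ∀ h : β, φ h ≠ Finset.univ) :
    ∀ a b : β, ∃ h, h ≠ a ∧ h ≠ b ∧ ¬ H.Adj a h := by
  classical
  intro a b
  by_contra hcon
  push_neg at hcon
  set ψ : β → Finset (Fin 2) :=
    fun h => if h = a then Finset.univ else if h = b then {0} else ∅ with hψ
  have hRDF : IsRDF H 2 ψ := by
    intro v hv i
    have hva : v ≠ a := by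
      intro e; rw [hψ] at hv; simp only [e, if_pos rfl] at hv
      exact absurd hv Finset.univ_nonempty.ne_empty
    have hvb : v ≠ b := by
      intro e; subst e
      rw [hψ] at hv
      simp only at hv
      split at hv
      · exact absurd hv Finset.univ_nonempty.ne_empty
      · simp at hv
    exact ⟨a, (hcon v hva hvb), by simp [hψ]⟩
  have hsupp : ∀ v : β, v ∉ ({a, b} : Finset β) → (ψ v).card = 0 := by
    intro v hv
    simp only [Finset.mem_insert, Finset.mem_singleton, not_or] at hv
    simp [hψ, hv.1, hv.2]
  have hwsum : rdWeight ψ = ∑ v ∈ ({a, b} : Finset β), (ψ v).card := by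
    rw [rdWeight]
    exact (Finset.sum_subset (Finset.subset_univ _) (fun v _ hv => hsupp v hv)).symm
  by_cases hab : a = b
  · have hw2 : rdWeight ψ = 2 := by
      subst hab
      rw [hwsum]
      simp [hψ]
    have := aux_rdNum_le H hRDF
    rw [hr, hw2] at this
    omega
  · have hw3 : rdWeight ψ = 3 := by
      rw [hwsum, Finset.sum_pair hab]
      simp [hψ, hab, Ne.symm hab]
    exact hno ψ hRDF hw3 a (by simp [hψ])

lemma aux_phiStar (hr : rdNum H 2 = 3)
    (hno : ∀ φ : β → Finset (Fin 2), IsRDF H 2 φ → rdWeight φ = 3 →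
      ∀ h : β, φ h ≠ Finset.univ) :
    ∃ φ : β → Finset (Fin 2), IsRDF H 2 φ ∧ rdWeight φ = 3 ∧
      ∀ i : Fin 2, ∃ m, i ∈ φ m := by
  classical
  obtain ⟨φ, hφ, hw⟩ := aux_exists_min H
  rw [hr] at hw
  by_cases hcol : ∀ i : Fin 2, ∃ m, i ∈ φ m
  · exact ⟨φ, hφ, hw, hcol⟩
  · push_neg at hcol
    obtain ⟨i₀, hi₀⟩ := hcol
    have hne : ∀ v, φ v ≠ ∅ := by
      intro v hv
      obtain ⟨u, _, hu⟩ := hφ v hv i₀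
      exact hi₀ u hu
    have hcard1 : ∀ v, (φ v).card = 1 := by
      intro v
      have h2 : (φ v).card ≤ 2 := by
        have := Finset.card_le_card (Finset.subset_univ (φ v))
        simpa using this
      have h1 : 1 ≤ (φ v).card :=
        Finset.card_pos.mpr (Finset.nonempty_iff_ne_empty.mpr (hne v))
      rcases (by omega : (φ v).card = 1 ∨ (φ v).card = 2) with h | h
      · exact h
      · exfalso
        have : φ v = Finset.univ := by
          apply Finset.eq_univ_of_card
          simpa using h
        exact hno φ hφ hw v this
    have hβ : Fintype.card β = 3 := by
      have h3 : rdWeight φ = Fintype.card β := by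
        simp [rdWeight, hcard1]
      omega
    have h0 : (0 : ℕ) < Fintype.card β := by omega
    obtain ⟨v₀⟩ : Nonempty β := Fintype.card_pos_iff.mp h0
    obtain ⟨v₁, hv₁⟩ : ∃ v, v ≠ v₀ := Fintype.exists_ne_of_one_lt_card (by omega) v₀
    refine ⟨fun h => if h = v₀ then {0} else {1}, ?_, ?_, ?_⟩
    · intro v hv
      exfalso
      by_cases h : v = v₀ <;> simp [h] at hv
    · have hc : ∀ v : β, (if v = v₀ then ({0} : Finset (Fin 2)) else {1}).card = 1 := by
        intro v; split <;> simp
      simp only [rdWeight, hc]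
      simp [hβ]
    · intro i
      fin_cases i
      · exact ⟨v₀, by simp⟩
      · exact ⟨v₁, by simp [hv₁]⟩

end Hfacts
section Product

variable {α β : Type*} [Fintype α] [Fintype β]

/-- weight of the copy of `H` over `x` -/
def wcopy (f : α × β → Finset (Fin 2)) (x : α) : ℕ := ∑ h, (f (x, h)).card

/-- set of colors appearing in the copy of `H` over `x` -/
def Ccopy (f : α × β → Finset (Fin 2)) (x : α) : Finset (Fin 2) :=
  Finset.univ.biUnion (fun h => f (x, h))

lemma aux_sum_wcopy (f : α × β → Finset (Fin 2)) :
    rdWeight f = ∑ x, wcopy f x := by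
  rw [rdWeight, Fintype.sum_prod_type]
  rfl

lemma aux_card_Ccopy_le (f : α × β → Finset (Fin 2)) (x : α) :
    (Ccopy f x).card ≤ wcopy f x :=
  Finset.card_biUnion_le

lemma aux_card_le_wcopy (f : α × β → Finset (Fin 2)) (x : α) (m : β) :
    (f (x, m)).card ≤ wcopy f x := by
  unfold wcopy
  exact Finset.single_le_sum (f := fun h => (f (x, h)).card) (fun i _ => Nat.zero_le _)
    (Finset.mem_univ m)

lemma aux_wcopy_congr {f g : α × β → Finset (Fin 2)} {x : α}
    (h : ∀ m : β, f (x, m) = g (x, m)) : wcopy f x = wcopy g x := by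
  unfold wcopy
  exact Finset.sum_congr rfl (fun m _ => by rw [h m])

lemma aux_Ccopy_congr {f g : α × β → Finset (Fin 2)} {x : α}
    (h : ∀ m : β, f (x, m) = g (x, m)) : Ccopy f x = Ccopy g x := by
  unfold Ccopy
  exact Finset.biUnion_congr rfl (fun m _ => h m)

variable [DecidableEq α] {G : SimpleGraph α} {H : SimpleGraph β}

lemma aux_UB (hr : rdNum H 2 = 3)
    (hno : ∀ φ : β → Finset (Fin 2), IsRDF H 2 φ → rdWeight φ = 3 →
      ∀ h : β, φ h ≠ Finset.univ)
    {A B : Finset α} (hAB : IsDomCouple G A B) :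
    rdNum (G.lexProd H) 2 ≤ 2 * A.card + 3 * B.card := by
  classical
  obtain ⟨φ, hφR, hφw, hφc⟩ := aux_phiStar hr hno
  have hβ : (0:ℕ) < Fintype.card β := by have := aux_card hr; omega
  obtain ⟨h₀⟩ : Nonempty β := Fintype.card_pos_iff.mp hβ
  set f : α × β → Finset (Fin 2) :=
    fun p => if p.1 ∈ B then φ p.2 else if p.1 ∈ A ∧ p.2 = h₀ then Finset.univ else ∅ with hf
  have hRDF : IsRDF (G.lexProd H) 2 f := by
    rintro ⟨x, h⟩ hempty i
    by_cases hxB : x ∈ B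
    · have hφh : φ h = ∅ := by
        have : f (x, h) = φ h := by simp [hf, hxB]
        rw [← this]; exact hempty
      obtain ⟨u, hu, hiu⟩ := hφR h hφh i
      exact ⟨(x, u), Or.inr ⟨rfl, hu⟩, by simp [hf, hxB, hiu]⟩
    · obtain ⟨w, hw, hadj⟩ := hAB.2 x hxB
      rcases Finset.mem_union.mp hw with hwA | hwB
      · have hwB' : w ∉ B := fun hc => (Finset.disjoint_left.mp hAB.1 hwA) hc
        exact ⟨(w, h₀), Or.inl hadj, by simp [hf, hwB', hwA]⟩
      · obtain ⟨m, him⟩ := hφc i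
        exact ⟨(w, m), Or.inl hadj, by simp [hf, hwB, him]⟩
  have hwc : ∀ x : α, wcopy f x = if x ∈ B then 3 else if x ∈ A then 2 else 0 := by
    intro x
    by_cases hxB : x ∈ B
    · simp only [hxB, if_pos]
      rw [wcopy]
      have : ∀ h : β, f (x, h) = φ h := fun h => by simp [hf, hxB]
      rw [Finset.sum_congr rfl (fun h _ => by rw [this h])]
      exact hφw
    · by_cases hxA : x ∈ A
      · simp only [hxB, if_neg, hxA, if_pos, if_true, if_false]
        rw [wcopy]
        have : ∀ h : β, (f (x, h)).card = if h = h₀ then 2 else 0 := by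
          intro h
          by_cases hh : h = h₀ <;> simp [hf, hxB, hxA, hh]
        rw [Finset.sum_congr rfl (fun h _ => by rw [this h])]
        simp
      · simp only [hxB, hxA, if_false]
        rw [wcopy]
        have : ∀ h : β, (f (x, h)).card = 0 := by
          intro h; simp [hf, hxB, hxA]
        rw [Finset.sum_congr rfl (fun h _ => by rw [this h])]
        simp
  have hweight : rdWeight f = 2 * A.card + 3 * B.card := by
    rw [aux_sum_wcopy, Finset.sum_congr rfl (fun x _ => hwc x)]
    have hpt : ∀ x : α, (if x ∈ B then 3 else if x ∈ A then 2 else 0) =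
        (if x ∈ B then (3:ℕ) else 0) + (if x ∈ A then 2 else 0) := by
      intro x
      by_cases h1 : x ∈ B <;> by_cases h2 : x ∈ A
      · exact absurd h1 (Finset.disjoint_left.mp hAB.1 h2)
      all_goals simp [h1, h2]
    rw [Finset.sum_congr rfl (fun x _ => hpt x), Finset.sum_add_distrib]
    rw [Finset.sum_ite_mem, Finset.sum_ite_mem, Finset.univ_inter, Finset.univ_inter,
      Finset.sum_const, Finset.sum_const, smul_eq_mul, smul_eq_mul]
    ring
  calc rdNum (G.lexProd H) 2 ≤ rdWeight f := aux_rdNum_le _ hRDF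
    _ = 2 * A.card + 3 * B.card := hweight

end Product
section LB

variable {α β : Type*} [Fintype α] [Fintype β] [DecidableEq α]
  {G : SimpleGraph α} {H : SimpleGraph β}

lemma aux_LB (hr : rdNum H 2 = 3)
    (hno : ∀ φ : β → Finset (Fin 2), IsRDF H 2 φ → rdWeight φ = 3 →
      ∀ h : β, φ h ≠ Finset.univ) :
    ∃ A B : Finset α, IsDomCouple G A B ∧
      2 * A.card + 3 * B.card ≤ rdNum (G.lexProd H) 2 := by
  classical
  set n := rdNum (G.lexProd H) 2 with hn
  obtain ⟨f₀, hf₀, hw₀⟩ := aux_exists_min (G.lexProd H)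
  set Dset : Set ℕ := {d | ∃ f : α × β → Finset (Fin 2), IsRDF (G.lexProd H) 2 f ∧
    rdWeight f = n ∧
    (Finset.univ.filter (fun x => wcopy f x = 2 ∧ Ccopy f x ≠ Finset.univ)).card = d}
    with hDset
  have hDne : Dset.Nonempty := ⟨_, f₀, hf₀, hw₀, rfl⟩
  obtain ⟨f, hfR, hfw, hfd⟩ := Nat.sInf_mem hDne
  set W : Fin 2 → Finset α :=
    fun i => Finset.univ.filter (fun u => wcopy f u = 1 ∧ i ∈ Ccopy f u) with hW
  set A₂ : Finset α := Finset.univ.filter (fun x => wcopy f x = 2) with hA₂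
  set Bs : Finset α := Finset.univ.filter (fun x => 3 ≤ wcopy f x) with hBs
  obtain ⟨c, hc2⟩ : ∃ c : Fin 2, 2 * (W c).card ≤ (W 0).card + (W 1).card := by
    rcases le_total (W 0).card (W 1).card with h | h
    · exact ⟨0, by omega⟩
    · exact ⟨1, by omega⟩
  set A : Finset α := A₂ ∪ W c with hA
  have hW01 : ∀ x : α, wcopy f x = 1 →
      ¬((0 : Fin 2) ∈ Ccopy f x ∧ (1 : Fin 2) ∈ Ccopy f x) := by
    rintro x hwx ⟨h0, h1⟩
    have hsub : ({0, 1} : Finset (Fin 2)) ⊆ Ccopy f x := by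
      intro i hi
      rcases Finset.mem_insert.mp hi with h | h
      · rwa [h]
      · rw [Finset.mem_singleton.mp h]; exact h1
    have h2 : 2 ≤ (Ccopy f x).card := by
      have := Finset.card_le_card hsub
      simpa using this
    have := aux_card_Ccopy_le f x
    omega
  -- budget
  have hbudget : 2 * A.card + 3 * Bs.card ≤ n := by
    have hsum : ∑ x, wcopy f x = n := by rw [← aux_sum_wcopy, hfw]
    have hpt : ∀ x : α,
        (if x ∈ Bs then (3:ℕ) else 0) + (if x ∈ A₂ then 2 else 0) +
        (if x ∈ W 0 then 1 else 0) + (if x ∈ W 1 then 1 else 0) ≤ wcopy f x := by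
      intro x
      have hBx : x ∈ Bs ↔ 3 ≤ wcopy f x := by simp [hBs]
      have hAx : x ∈ A₂ ↔ wcopy f x = 2 := by simp [hA₂]
      have hW0x : x ∈ W 0 ↔ wcopy f x = 1 ∧ (0:Fin 2) ∈ Ccopy f x := by simp [hW]
      have hW1x : x ∈ W 1 ↔ wcopy f x = 1 ∧ (1:Fin 2) ∈ Ccopy f x := by simp [hW]
      by_cases h3 : 3 ≤ wcopy f x
      · have : x ∈ Bs := hBx.mpr h3
        have hA' : x ∉ A₂ := fun h => by rw [hAx] at h; omega
        have h0' : x ∉ W 0 := fun h => by rw [hW0x] at h; omega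
        have h1' : x ∉ W 1 := fun h => by rw [hW1x] at h; omega
        simp [this, hA', h0', h1']
        omega
      · have hB' : x ∉ Bs := fun h => h3 (hBx.mp h)
        by_cases h2 : wcopy f x = 2
        · have : x ∈ A₂ := hAx.mpr h2
          have h0' : x ∉ W 0 := fun h => by rw [hW0x] at h; omega
          have h1' : x ∉ W 1 := fun h => by rw [hW1x] at h; omega
          simp [this, hB', h0', h1']
          omega
        · have hA' : x ∉ A₂ := fun h => h2 (hAx.mp h)
          by_cases h1 : wcopy f x = 1
          · have hnboth := hW01 x h1
            by_cases hc0 : (0:Fin 2) ∈ Ccopy f x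
            · have h1' : x ∉ W 1 := fun h => hnboth ⟨hc0, (hW1x.mp h).2⟩
              have h0' : x ∈ W 0 := hW0x.mpr ⟨h1, hc0⟩
              simp [hB', hA', h0', h1']
              omega
            · have h0' : x ∉ W 0 := fun h => hc0 (hW0x.mp h).2
              by_cases hc1 : (1:Fin 2) ∈ Ccopy f x
              · have h1' : x ∈ W 1 := hW1x.mpr ⟨h1, hc1⟩
                simp [hB', hA', h0', h1']
                omega
              · have h1' : x ∉ W 1 := fun h => hc1 (hW1x.mp h).2
                simp [hB', hA', h0', h1']
          · have h0' : x ∉ W 0 := fun h => h1 (hW0x.mp h).1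
            have h1' : x ∉ W 1 := fun h => h1 (hW1x.mp h).1
            simp [hB', hA', h0', h1']
    have hsum2 : 3 * Bs.card + 2 * A₂.card + (W 0).card + (W 1).card ≤ n := by
      have hle : ∑ x, ((if x ∈ Bs then (3:ℕ) else 0) + (if x ∈ A₂ then 2 else 0) +
          (if x ∈ W 0 then 1 else 0) + (if x ∈ W 1 then 1 else 0)) ≤ ∑ x, wcopy f x :=
        Finset.sum_le_sum (fun x _ => hpt x)
      rw [Finset.sum_add_distrib, Finset.sum_add_distrib, Finset.sum_add_distrib] at hle
      rw [Finset.sum_ite_mem, Finset.sum_ite_mem, Finset.sum_ite_mem, Finset.sum_ite_mem,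
        Finset.univ_inter, Finset.univ_inter, Finset.univ_inter, Finset.univ_inter,
        Finset.sum_const, Finset.sum_const, Finset.sum_const, Finset.sum_const,
        smul_eq_mul, smul_eq_mul, smul_eq_mul, smul_eq_mul, hsum] at hle
      omega
    have hAcard : A.card ≤ A₂.card + (W c).card := Finset.card_union_le _ _
    omega
  -- domination
  have hdom : ∀ x, x ∉ Bs → ∃ w ∈ A ∪ Bs, G.Adj w x := by
    intro x hxB
    by_contra hcon
    push_neg at hcon
    have hwx : wcopy f x ≤ 2 := by
      have : ¬ (3 ≤ wcopy f x) := fun h => hxB (Finset.mem_filter.mpr ⟨Finset.mem_univ _, h⟩)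
      omega
    have hnb : ∀ u, G.Adj u x → wcopy f u ≤ 1 ∧ u ∉ W c := by
      intro u hu
      have hA' : u ∉ A ∪ Bs := fun hmem => hcon u hmem hu
      have h1 : u ∉ A₂ := fun h => hA' (Finset.mem_union_left _ (Finset.mem_union_left _ h))
      have h2 : u ∉ W c := fun h => hA' (Finset.mem_union_left _ (Finset.mem_union_right _ h))
      have h3 : u ∉ Bs := fun h => hA' (Finset.mem_union_right _ h)
      have e1 : wcopy f u ≠ 2 := fun h => h1 (Finset.mem_filter.mpr ⟨Finset.mem_univ _, h⟩)
      have e3 : ¬ (3 ≤ wcopy f u) := fun h => h3 (Finset.mem_filter.mpr ⟨Finset.mem_univ _, h⟩)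
      exact ⟨by omega, h2⟩
    have hs2 : ∀ h : β, f (x, h) = ∅ → ∀ i : Fin 2,
        (∃ m, H.Adj m h ∧ i ∈ f (x, m)) ∨ (∃ u m', G.Adj u x ∧ i ∈ f (u, m')) := by
      intro h hh i
      obtain ⟨⟨v, m⟩, hadj, hmem⟩ := hfR (x, h) hh i
      rcases hadj with hg | ⟨he, hH⟩
      · exact Or.inr ⟨v, m, hg, hmem⟩
      · refine Or.inl ⟨m, hH, ?_⟩
        have : v = x := he
        rwa [this] at hmem
    have hs3 : ∀ h : β, f (x, h) = ∅ → ∃ m, H.Adj m h ∧ c ∈ f (x, m) := by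
      intro h hh
      rcases hs2 h hh c with h' | ⟨u, m', hu, hm'⟩
      · exact h'
      · exfalso
        have h1 : 1 ≤ wcopy f u := by
          have := aux_card_le_wcopy f u m'
          have hpos : 0 < (f (u, m')).card := Finset.card_pos.mpr ⟨c, hm'⟩
          omega
        have h2 := (hnb u hu).1
        exact (hnb u hu).2 (Finset.mem_filter.mpr ⟨Finset.mem_univ _, by omega,
          Finset.mem_biUnion.mpr ⟨m', Finset.mem_univ _, hm'⟩⟩)
    set supp : Finset β := Finset.univ.filter (fun h => f (x, h) ≠ ∅) with hsupp
    have hsuppmem : ∀ {h : β}, h ∈ supp ↔ f (x, h) ≠ ∅ := by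
      intro h; simp [hsupp]
    have hsuppcard : supp.card ≤ 2 := by
      have h1 : supp.card ≤ ∑ h ∈ supp, (f (x, h)).card := by
        rw [Finset.card_eq_sum_ones]
        exact Finset.sum_le_sum (fun h hh =>
          Finset.card_pos.mpr (Finset.nonempty_iff_ne_empty.mpr (hsuppmem.mp hh)))
      have h2 : ∑ h ∈ supp, (f (x, h)).card ≤ wcopy f x := by
        unfold wcopy
        exact Finset.sum_le_sum_of_subset (Finset.filter_subset _ _)
      omega
    have hexempty : ∃ h, f (x, h) = ∅ := by
      by_contra hc'
      push_neg at hc'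
      have huniv : supp = Finset.univ :=
        Finset.eq_univ_iff_forall.mpr (fun h => hsuppmem.mpr (hc' h).ne_empty)
      have : Fintype.card β ≤ 2 := by
        rw [← Finset.card_univ, ← huniv]; exact hsuppcard
      have := aux_card hr
      omega
    obtain ⟨he, hhe⟩ := hexempty
    obtain ⟨m₀, hm₀adj, hm₀c⟩ := hs3 he hhe
    have hm₀supp : m₀ ∈ supp := hsuppmem.mpr (fun h' => by
      rw [h'] at hm₀c; exact absurd hm₀c (Finset.notMem_empty _))
    by_cases hallc : ∀ h' ∈ supp, c ∈ f (x, h')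
    · -- all support vertices contain c
      have hc1 : 1 ≤ supp.card := Finset.card_pos.mpr ⟨m₀, hm₀supp⟩
      rcases (by omega : supp.card = 1 ∨ supp.card = 2) with h1 | h2
      · obtain ⟨a, ha⟩ := Finset.card_eq_one.mp h1
        obtain ⟨h₀, h₀a, _, h₀nadj⟩ := aux_F2 hr hno a a
        have h₀e : f (x, h₀) = ∅ := by
          by_contra hne'
          have := hsuppmem.mpr hne'
          rw [ha, Finset.mem_singleton] at this
          exact h₀a this
        obtain ⟨m, hmadj, hmc⟩ := hs3 h₀ h₀e
        have hms : m ∈ supp := hsuppmem.mpr (fun h' => by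
          rw [h'] at hmc; exact absurd hmc (Finset.notMem_empty _))
        rw [ha, Finset.mem_singleton] at hms
        rw [hms] at hmadj
        exact h₀nadj hmadj
      · obtain ⟨a, b, hab, hsab⟩ := Finset.card_eq_two.mp h2
        have hca : c ∈ f (x, a) := hallc a (by rw [hsab]; simp)
        have hcb : c ∈ f (x, b) := hallc b (by rw [hsab]; simp)
        have hsum2 : (f (x, a)).card + (f (x, b)).card ≤ 2 := by
          have hle : ∑ h ∈ ({a, b} : Finset β), (f (x, h)).card ≤ wcopy f x := by
            unfold wcopy
            exact Finset.sum_le_sum_of_subset (Finset.subset_univ _)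
          rw [Finset.sum_pair hab] at hle
          omega
        have h1a : 1 ≤ (f (x, a)).card := Finset.card_pos.mpr ⟨c, hca⟩
        have h1b : 1 ≤ (f (x, b)).card := Finset.card_pos.mpr ⟨c, hcb⟩
        have hfa : f (x, a) = {c} := by
          obtain ⟨y, hy⟩ := Finset.card_eq_one.mp (by omega : (f (x, a)).card = 1)
          rw [hy] at hca ⊢
          rw [Finset.mem_singleton.mp hca]
        have hfb : f (x, b) = {c} := by
          obtain ⟨y, hy⟩ := Finset.card_eq_one.mp (by omega : (f (x, b)).card = 1)
          rw [hy] at hcb ⊢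
          rw [Finset.mem_singleton.mp hcb]
        have hwx2 : wcopy f x = 2 := by
          have hle : ∑ h ∈ ({a, b} : Finset β), (f (x, h)).card ≤ wcopy f x := by
            unfold wcopy; exact Finset.sum_le_sum_of_subset (Finset.subset_univ _)
          rw [Finset.sum_pair hab, hfa, hfb] at hle
          simp only [Finset.card_singleton] at hle
          omega
        have hCx : Ccopy f x ≠ Finset.univ := by
          intro hcu
          have hsub : Ccopy f x ⊆ {c} := by
            intro i hi
            obtain ⟨m, _, him⟩ := Finset.mem_biUnion.mp hi
            have hms : m ∈ supp := hsuppmem.mpr (fun h' => by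
              rw [h'] at him; exact absurd him (Finset.notMem_empty _))
            rw [hsab] at hms
            rcases Finset.mem_insert.mp hms with h | h
            · rw [h, hfa] at him; exact him
            · rw [Finset.mem_singleton.mp h, hfb] at him; exact him
          rw [hcu] at hsub
          have := Finset.card_le_card hsub
          simp at this
        set i₁ : Fin 2 := if c = 0 then 1 else 0 with hi₁
        have hi₁c : i₁ ≠ c := by
          by_cases h0 : c = 0
          · rw [hi₁, if_pos h0, h0]; decide
          · rw [hi₁, if_neg h0]; exact fun h => h0 h.symm
        obtain ⟨u', m', hu'adj, hi₁m'⟩ : ∃ u m', G.Adj u x ∧ i₁ ∈ f (u, m') := by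
          rcases hs2 he hhe i₁ with ⟨m, hm, him⟩ | h'
          · exfalso
            have hms : m ∈ supp := hsuppmem.mpr (fun h' => by
              rw [h'] at him; exact absurd him (Finset.notMem_empty _))
            rw [hsab] at hms
            rcases Finset.mem_insert.mp hms with h | h
            · rw [h, hfa] at him; exact hi₁c (Finset.mem_singleton.mp him)
            · rw [Finset.mem_singleton.mp h, hfb] at him
              exact hi₁c (Finset.mem_singleton.mp him)
          · exact h'
        have hu'x : u' ≠ x := hu'adj.ne
        have hwu' : wcopy f u' = 1 := by
          have hb1 := (hnb u' hu'adj).1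
          have hb2 := aux_card_le_wcopy f u' m'
          have hb3 : 0 < (f (u', m')).card := Finset.card_pos.mpr ⟨i₁, hi₁m'⟩
          omega
        have hfu'm' : f (u', m') = {i₁} := by
          have hb2 := aux_card_le_wcopy f u' m'
          have hb3 : 0 < (f (u', m')).card := Finset.card_pos.mpr ⟨i₁, hi₁m'⟩
          obtain ⟨y, hy⟩ := Finset.card_eq_one.mp (by omega : (f (u', m')).card = 1)
          rw [hy] at hi₁m' ⊢
          rw [Finset.mem_singleton.mp hi₁m']
        set f' : α × β → Finset (Fin 2) :=
          Function.update (Function.update f (x, b) ∅) (u', m') Finset.univ with hf'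
        have hne_pts : ((x, b) : α × β) ≠ (u', m') := by
          intro hp
          exact hu'x (congrArg Prod.fst hp).symm
        have hf'u' : f' (u', m') = Finset.univ := by
          rw [hf']; exact Function.update_self _ _ _
        have hf'xb : f' (x, b) = ∅ := by
          rw [hf', Function.update_of_ne hne_pts]
          exact Function.update_self _ _ _
        have hf'other : ∀ p : α × β, p ≠ (x, b) → p ≠ (u', m') → f' p = f p := by
          intro p hp1 hp2
          rw [hf', Function.update_of_ne hp2, Function.update_of_ne hp1]
        have hR' : IsRDF (G.lexProd H) 2 f' := by
          rintro ⟨z, h⟩ hz i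
          by_cases hzb : ((z, h) : α × β) = (x, b)
          · refine ⟨(u', m'), Or.inl ?_, by rw [hf'u']; exact Finset.mem_univ i⟩
            have hzx : z = x := (Prod.ext_iff.mp hzb).1
            rw [hzx]; exact hu'adj
          · have hzu : ((z, h) : α × β) ≠ (u', m') := by
              intro e
              rw [e, hf'u'] at hz
              exact absurd hz Finset.univ_nonempty.ne_empty
            have hfzh : f (z, h) = ∅ := by rw [← hf'other _ hzb hzu]; exact hz
            obtain ⟨⟨v, m⟩, hadj, hmem⟩ := hfR (z, h) hfzh i
            by_cases hvm : ((v, m) : α × β) = (u', m')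
            · exact ⟨(u', m'), by rw [← hvm]; exact hadj,
                by rw [hf'u']; exact Finset.mem_univ i⟩
            · by_cases hvb : ((v, m) : α × β) = (x, b)
              · have hic : i = c := by
                  rw [hvb, hfb] at hmem
                  exact Finset.mem_singleton.mp hmem
                have hvx : v = x := (Prod.ext_iff.mp hvb).1
                rcases hadj with hg | ⟨hve, hH⟩
                · refine ⟨(x, a), Or.inl ?_, ?_⟩
                  · rw [← hvx]; exact hg
                  · rw [hf'other (x, a) (by simp [hab]) (by
                      intro e
                      exact hu'x ((Prod.ext_iff.mp e).1).symm), hfa, hic]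
                    exact Finset.mem_singleton_self c
                · have hvz : v = z := hve
                  have hzx : z = x := by rw [← hvz]; exact hvx
                  refine ⟨(u', m'), Or.inl ?_, by rw [hf'u']; exact Finset.mem_univ i⟩
                  rw [hzx]; exact hu'adj
              · exact ⟨(v, m), hadj, by rw [hf'other _ hvb hvm]; exact hmem⟩
        have hptx : ∀ h : β, f' (x, h) = if h = b then ∅ else f (x, h) := by
          intro h
          by_cases hb : h = b
          · rw [if_pos hb, hb]; exact hf'xb
          · rw [if_neg hb]
            exact hf'other _ (by simp [hb]) (by
              intro e; exact hu'x ((Prod.ext_iff.mp e).1).symm)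
        have hptu : ∀ h : β, f' (u', h) = if h = m' then Finset.univ else f (u', h) := by
          intro h
          by_cases hm : h = m'
          · rw [if_pos hm, hm]; exact hf'u'
          · rw [if_neg hm]
            exact hf'other _ (by
              intro e; exact hu'x ((Prod.ext_iff.mp e).1)) (by simp [hm])
        have hwf'x : wcopy f' x = 1 := by
          have e1 : ∑ h ∈ Finset.univ.erase b, (f (x, h)).card + (f (x, b)).card
              = wcopy f x := Finset.sum_erase_add _ _ (Finset.mem_univ b)
          have e2 : wcopy f' x = ∑ h ∈ Finset.univ.erase b, (f (x, h)).card := by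
            unfold wcopy
            rw [← Finset.sum_erase_add _ _ (Finset.mem_univ b), hptx b, if_pos rfl]
            simp only [Finset.card_empty, add_zero]
            exact Finset.sum_congr rfl (fun h hh => by
              rw [hptx h, if_neg (Finset.mem_erase.mp hh).1])
          rw [hfb] at e1
          simp only [Finset.card_singleton] at e1
          omega
        have hwf'u : wcopy f' u' = 2 := by
          have e1 : ∑ h ∈ Finset.univ.erase m', (f (u', h)).card + (f (u', m')).card
              = wcopy f u' := Finset.sum_erase_add _ _ (Finset.mem_univ m')
          have e2 : wcopy f' u' = ∑ h ∈ Finset.univ.erase m', (f (u', h)).card + 2 := by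
            unfold wcopy
            rw [← Finset.sum_erase_add _ _ (Finset.mem_univ m'), hptu m', if_pos rfl]
            simp only [Finset.card_univ, Fintype.card_fin]
            congr 1
            exact Finset.sum_congr rfl (fun h hh => by
              rw [hptu h, if_neg (Finset.mem_erase.mp hh).1])
          rw [hfu'm'] at e1
          simp only [Finset.card_singleton] at e1
          omega
        have hCf'u : Ccopy f' u' = Finset.univ := by
          apply Finset.eq_univ_iff_forall.mpr
          intro i
          exact Finset.mem_biUnion.mpr ⟨m', Finset.mem_univ _,
            by rw [hf'u']; exact Finset.mem_univ i⟩
        have hcopy_other : ∀ z : α, z ≠ x → z ≠ u' → ∀ m : β, f' (z, m) = f (z, m) := by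
          intro z hzx hzu m
          exact hf'other _ (by simp [hzx]) (by simp [hzu])
        have hW' : rdWeight f' = n := by
          rw [aux_sum_wcopy]
          have hu'mem : u' ∈ Finset.univ.erase x :=
            Finset.mem_erase.mpr ⟨hu'x, Finset.mem_univ _⟩
          have d1 : ∑ z ∈ (Finset.univ.erase x).erase u', wcopy f' z + wcopy f' u'
              = ∑ z ∈ Finset.univ.erase x, wcopy f' z := Finset.sum_erase_add _ _ hu'mem
          have d2 : ∑ z ∈ Finset.univ.erase x, wcopy f' z + wcopy f' x
              = ∑ z, wcopy f' z := Finset.sum_erase_add _ _ (Finset.mem_univ x)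
          have d3 : ∑ z ∈ (Finset.univ.erase x).erase u', wcopy f z + wcopy f u'
              = ∑ z ∈ Finset.univ.erase x, wcopy f z := Finset.sum_erase_add _ _ hu'mem
          have d4 : ∑ z ∈ Finset.univ.erase x, wcopy f z + wcopy f x
              = ∑ z, wcopy f z := Finset.sum_erase_add _ _ (Finset.mem_univ x)
          have dcongr : ∑ z ∈ (Finset.univ.erase x).erase u', wcopy f' z
              = ∑ z ∈ (Finset.univ.erase x).erase u', wcopy f z := by
            apply Finset.sum_congr rfl
            intro z hz
            have hz1 : z ≠ u' := (Finset.mem_erase.mp hz).1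
            have hz2 : z ≠ x := (Finset.mem_erase.mp (Finset.mem_erase.mp hz).2).1
            exact aux_wcopy_congr (fun m => hcopy_other z hz2 hz1 m)
          have hsumf : ∑ z, wcopy f z = n := by rw [← aux_sum_wcopy, hfw]
          omega
        have hxD : x ∈ Finset.univ.filter
            (fun z => wcopy f z = 2 ∧ Ccopy f z ≠ Finset.univ) :=
          Finset.mem_filter.mpr ⟨Finset.mem_univ _, hwx2, hCx⟩
        have hsubD : Finset.univ.filter
            (fun z => wcopy f' z = 2 ∧ Ccopy f' z ≠ Finset.univ) ⊆
            (Finset.univ.filter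
              (fun z => wcopy f z = 2 ∧ Ccopy f z ≠ Finset.univ)).erase x := by
          intro z hz
          have hz' := (Finset.mem_filter.mp hz).2
          by_cases hzx : z = x
          · rw [hzx, hwf'x] at hz'
            exact absurd hz'.1 (by decide)
          · by_cases hzu : z = u'
            · rw [hzu, hCf'u] at hz'
              exact absurd rfl hz'.2
            · refine Finset.mem_erase.mpr ⟨hzx, Finset.mem_filter.mpr
                ⟨Finset.mem_univ _, ?_, ?_⟩⟩
              · rw [← aux_wcopy_congr (fun m => hcopy_other z hzx hzu m)]
                exact hz'.1
              · rw [← aux_Ccopy_congr (fun m => hcopy_other z hzx hzu m)]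
                exact hz'.2
        have hlt : (Finset.univ.filter
            (fun z => wcopy f' z = 2 ∧ Ccopy f' z ≠ Finset.univ)).card <
            (Finset.univ.filter
              (fun z => wcopy f z = 2 ∧ Ccopy f z ≠ Finset.univ)).card := by
          have hc1' := Finset.card_le_card hsubD
          have hc2' := Finset.card_erase_of_mem hxD
          have hc3' : 0 < (Finset.univ.filter
              (fun z => wcopy f z = 2 ∧ Ccopy f z ≠ Finset.univ)).card :=
            Finset.card_pos.mpr ⟨x, hxD⟩
          omega
        have hmem' : (Finset.univ.filter
            (fun z => wcopy f' z = 2 ∧ Ccopy f' z ≠ Finset.univ)).card ∈ Dset :=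
          ⟨f', hR', hW', rfl⟩
        have hsle := Nat.sInf_le hmem'
        rw [hfd] at hlt
        omega
    · -- some support vertex misses c
      push_neg at hallc
      obtain ⟨b', hb'supp, hb'c⟩ := hallc
      have hm₀b' : m₀ ≠ b' := fun e => hb'c (e ▸ hm₀c)
      have hsupp_eq : ({m₀, b'} : Finset β) = supp := by
        apply Finset.eq_of_subset_of_card_le
        · intro z hz
          rcases Finset.mem_insert.mp hz with h | h
          · rw [h]; exact hm₀supp
          · rw [Finset.mem_singleton.mp h]; exact hb'supp
        · rw [Finset.card_pair hm₀b']; exact hsuppcard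
      obtain ⟨h₀, h₀m, h₀b, h₀nadj⟩ := aux_F2 hr hno m₀ b'
      have h₀e : f (x, h₀) = ∅ := by
        by_contra hne'
        have := hsuppmem.mpr hne'
        rw [← hsupp_eq] at this
        rcases Finset.mem_insert.mp this with h | h
        · exact h₀m h
        · exact h₀b (Finset.mem_singleton.mp h)
      obtain ⟨m, hmadj, hmc⟩ := hs3 h₀ h₀e
      have hms : m ∈ supp := hsuppmem.mpr (fun h' => by
        rw [h'] at hmc; exact absurd hmc (Finset.notMem_empty _))
      rw [← hsupp_eq] at hms
      rcases Finset.mem_insert.mp hms with h | h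
      · rw [h] at hmadj; exact h₀nadj hmadj
      · rw [Finset.mem_singleton.mp h] at hmc; exact hb'c hmc
  refine ⟨A, Bs, ⟨?_, hdom⟩, hbudget⟩
  · rw [Finset.disjoint_left]
    intro z hzA hzB
    have hzB' := (Finset.mem_filter.mp hzB).2
    rcases Finset.mem_union.mp hzA with h | h
    · have := (Finset.mem_filter.mp h).2; omega
    · have := ((Finset.mem_filter.mp h).2).1; omega

end LB
theorem stmt14 {α β : Type*} [Fintype α] [Fintype β] [DecidableEq α]
    (G : SimpleGraph α) (H : SimpleGraph β)
    (hHc : H.Connected) (hr : rdNum H 2 = 3)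
    (hno : ∀ φ : β → Finset (Fin 2), IsRDF H 2 φ → rdWeight φ = 3 →
      ∀ h : β, φ h ≠ Finset.univ) :
    rdNum (G.lexProd H) 2 =
      sInf {n | ∃ A B : Finset α, IsDomCouple G A B ∧ n = 2 * A.card + 3 * B.card} := by
  classical
  have hRne : {n | ∃ A B : Finset α, IsDomCouple G A B ∧
      n = 2 * A.card + 3 * B.card}.Nonempty := by
    refine ⟨2 * (∅ : Finset α).card + 3 * (Finset.univ : Finset α).card, ∅, Finset.univ,
      ⟨?_, ?_⟩, rfl⟩
    · simp
    · intro x hx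
      exact absurd (Finset.mem_univ x) hx
  apply le_antisymm
  · obtain ⟨A, B, hAB, hval⟩ := Nat.sInf_mem hRne
    rw [hval]
    exact aux_UB hr hno hAB
  · obtain ⟨A, B, hAB, hle⟩ := aux_LB (G := G) hr hno
    exact le_trans (Nat.sInf_le ⟨A, B, hAB, rfl⟩) hle
end
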